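/- arXiv:math-ph/0106012 — 3 statements merged into one kernel-verified Lean document; each statement's English description precedes it below -/
import Mathlib

section
/- Let (Ω,T) be strictly ergodic with invariant probability measure μ, and let A : Ω → GL(2,ℝ) be continuous. Then limsup_{n→∞} (1/n) log‖A(n,ω)‖ ≤ Λ(A) holds uniformly on Ω; that is, for every ε > 0 there exists N such that (1/n) log‖A(n,ω)‖ ≤ Λ(A) + ε for all n ≥ N and all ω ∈ Ω. -/
open MeasureTheory


noncomputable def opNorm (M : Matrix (Fin 2) (Fin 2) ℝ) : ℝ :=
  ‖LinearMap.toContinuousLinearMap (Matrix.toEuclideanLin M)‖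

variable {Ω : Type*} [MetricSpace Ω] [CompactSpace Ω] [MeasurableSpace Ω] [BorelSpace Ω]

/-- Minimality: every `ℤ`-orbit of the homeomorphism `T` is dense. -/
def IsMinimalSystem (T : Ω ≃ₜ Ω) : Prop :=
  ∀ ω : Ω, Dense (Set.range fun n : ℤ => (T.toEquiv ^ n) ω)

/-- `μ` is a `T`-invariant Borel probability measure. -/
def IsInvProbG (T : Ω ≃ₜ Ω) (μ : Measure Ω) : Prop :=
  IsProbabilityMeasure μ ∧ μ.map T = μ

/-- `(Ω,T)` is uniquely ergodic with unique invariant probability measure `μ`. -/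
def IsUniquelyErgodicWithG (T : Ω ≃ₜ Ω) (μ : Measure Ω) : Prop :=
  IsInvProbG T μ ∧ ∀ ν : Measure Ω, IsInvProbG T ν → ν = μ

/-- `A(n,ω)` for `n ≥ 0`. -/
noncomputable def cocPg (T : Ω ≃ₜ Ω) (A : Ω → Matrix (Fin 2) (Fin 2) ℝ) :
    ℕ → Ω → Matrix (Fin 2) (Fin 2) ℝ
  | 0, _ => 1
  | (k+1), ω => A ((⇑T)^[k] ω) * cocPg T A k ω

/-- The cocycle `A(n,ω)`, `n ∈ ℤ`. -/
noncomputable def cocg (T : Ω ≃ₜ Ω) (A : Ω → Matrix (Fin 2) (Fin 2) ℝ) (n : ℤ) (ω : Ω) :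
    Matrix (Fin 2) (Fin 2) ℝ :=
  if 0 ≤ n then cocPg T A n.toNat ω else (cocPg T A (-n).toNat ((⇑T.symm)^[(-n).toNat] ω))⁻¹

/-- `Λ(A) = inf_{n ≥ 1} (1/n) ∫ log ‖A(n,ω)‖ dμ(ω)`. -/
noncomputable def lyapG (T : Ω ≃ₜ Ω) (μ : Measure Ω) (A : Ω → Matrix (Fin 2) (Fin 2) ℝ) : ℝ :=
  ⨅ n : ℕ+, (1 / (n : ℝ)) * ∫ ω, Real.log (opNorm (cocPg T A (n : ℕ) ω)) ∂μ

/-- `(1/|n|) log ‖A(n,ω)‖ → L` as `|n| → ∞`, uniformly on `Ω`. -/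
def IsUniformG (T : Ω ≃ₜ Ω) (A : Ω → Matrix (Fin 2) (Fin 2) ℝ) (L : ℝ) : Prop :=
  ∀ ε > (0 : ℝ), ∃ N : ℕ, ∀ n : ℤ, (N : ℤ) ≤ |n| → ∀ ω : Ω,
    |(1 / ((|n| : ℤ) : ℝ)) * Real.log (opNorm (cocg T A n ω)) - L| ≤ ε

/-- The Birkhoff averages `A_n(b)(ω)`, `n ∈ ℤ`. -/
noncomputable def birk (T : Ω ≃ₜ Ω) (b : Ω → ℝ) (n : ℤ) (ω : Ω) : ℝ :=
  if 0 ≤ n then (1 / (n : ℝ)) * ∑ k ∈ Finset.range n.toNat, b ((⇑T)^[k] ω)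
  else (1 / ((|n| : ℤ) : ℝ)) * ∑ k ∈ Finset.range (-n).toNat, b ((⇑T.symm)^[k + 1] ω)



open Filter Topology BoundedContinuousFunction
open scoped ENNReal NNReal
set_option maxHeartbeats 1000000

section AuxOpNorm

lemma euclin_apply (M : Matrix (Fin 2) (Fin 2) ℝ) (x : EuclideanSpace ℝ (Fin 2)) (i : Fin 2) :
    (Matrix.toEuclideanLin M) x i = (M.mulVec x) i := by
  rfl

lemma opNorm_one : opNorm 1 = 1 := by
  unfold opNorm
  rw [show (LinearMap.toContinuousLinearMap (Matrix.toEuclideanLin (1 : Matrix (Fin 2) (Fin 2) ℝ))) = ContinuousLinearMap.id ℝ (EuclideanSpace ℝ (Fin 2)) by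
    ext x i
    rw [ContinuousLinearMap.id_apply]
    simp only [LinearMap.coe_toContinuousLinearMap', euclin_apply, Matrix.one_mulVec]]
  exact ContinuousLinearMap.norm_id

lemma opNorm_mul_le (M N : Matrix (Fin 2) (Fin 2) ℝ) : opNorm (M * N) ≤ opNorm M * opNorm N := by
  unfold opNorm
  rw [show (LinearMap.toContinuousLinearMap (Matrix.toEuclideanLin (M * N)))
      = (LinearMap.toContinuousLinearMap (Matrix.toEuclideanLin M)).comp
        (LinearMap.toContinuousLinearMap (Matrix.toEuclideanLin N)) by
    ext x i
    simp only [ContinuousLinearMap.comp_apply, LinearMap.coe_toContinuousLinearMap']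
    simp only [euclin_apply]; rw [← Matrix.mulVec_mulVec]; rfl]
  exact ContinuousLinearMap.opNorm_comp_le _ _

lemma opNorm_pos {M : Matrix (Fin 2) (Fin 2) ℝ} (h : IsUnit M) : 0 < opNorm M := by
  unfold opNorm
  rw [norm_pos_iff]
  intro hc
  have hM : Matrix.toEuclideanLin M = 0 := by
    have := congrArg (ContinuousLinearMap.toLinearMap) hc
    simpa using this
  have hM0 : M = 0 := by
    have := Matrix.toEuclideanLin.injective (a₁ := M) (a₂ := 0) (by simpa using hM)
    simpa using this
  rw [hM0] at h
  simp at h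

lemma continuous_opNorm : Continuous opNorm := by
  have h : Continuous fun M : Matrix (Fin 2) (Fin 2) ℝ =>
      (LinearMap.toContinuousLinearMap (Matrix.toEuclideanLin M)) := by
    have : IsLinearMap ℝ (fun M : Matrix (Fin 2) (Fin 2) ℝ =>
        (LinearMap.toContinuousLinearMap (Matrix.toEuclideanLin M))) := by
      constructor <;> intros <;> · ext x i; simp [euclin_apply]
    exact LinearMap.continuous_of_finiteDimensional (IsLinearMap.mk' _ this)
  exact h.norm

end AuxOpNorm


-- pure combinatorial double-sum lemma
lemma double_sum_le (φ : ℕ → ℝ) (F : ℝ) (hφ : ∀ k, |φ k| ≤ F) (m n : ℕ) (hm : 1 ≤ m)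
    (hn : 2*m ≤ n) :
    ∑ i ∈ Finset.range m, ∑ j ∈ Finset.range ((n-i)/m), φ (i + j*m)
      ≤ (∑ k ∈ Finset.range n, φ k) + 2*(m:ℝ)*F := by
  have hF : 0 ≤ F := le_trans (abs_nonneg _) (hφ 0)
  classical
  set D : Finset ((_ : ℕ) × ℕ) := (Finset.range m).sigma (fun i => Finset.range ((n-i)/m)) with hD
  set e : ((_ : ℕ) × ℕ) → ℕ := fun p => p.1 + p.2 * m with he
  have hinj : Set.InjOn e D := by
    intro p hp p' hp' hpe
    rw [Finset.mem_coe] at hp hp'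
    simp only [hD, Finset.mem_sigma, Finset.mem_range] at hp hp'
    simp only [he] at hpe
    have h1 : p.1 = p'.1 := by
      have e1 : (p.1 + p.2 * m) % m = p.1 := by
        rw [Nat.add_mul_mod_self_right]; exact Nat.mod_eq_of_lt hp.1
      have e2 : (p'.1 + p'.2 * m) % m = p'.1 := by
        rw [Nat.add_mul_mod_self_right]; exact Nat.mod_eq_of_lt hp'.1
      rw [← e1, ← e2]
      rw [hpe]
    have h2 : p.2 = p'.2 := by
      rw [h1] at hpe
      have := Nat.add_left_cancel hpe
      exact Nat.eq_of_mul_eq_mul_right hm this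
    exact Sigma.ext h1 (heq_of_eq h2)
  set I : Finset ℕ := D.image e with hI
  have hcard : I.card = D.card := Finset.card_image_of_injOn hinj
  have hsub : I ⊆ Finset.range n := by
    intro k hk
    simp only [hI, Finset.mem_image] at hk
    obtain ⟨p, hp, rfl⟩ := hk
    simp only [hD, Finset.mem_sigma, Finset.mem_range] at hp
    have h1 : p.2 + 1 ≤ (n - p.1)/m := hp.2
    have h2 : (p.2 + 1) * m ≤ n - p.1 := (Nat.le_div_iff_mul_le hm).mp h1
    have h3 : p.1 ≤ n := by omega
    simp only [Finset.mem_range, he]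
    have : (p.2+1)*m = p.2*m + m := by ring
    omega
  have hDcard : n ≤ D.card + 2*m := by
    have h1 : D.card = ∑ i ∈ Finset.range m, (n-i)/m := Finset.card_sigma _ _ |>.trans (by
      simp)
    have h2 : ∀ i ∈ Finset.range m, (n-m)/m ≤ (n-i)/m := by
      intro i hi
      simp only [Finset.mem_range] at hi
      exact Nat.div_le_div_right (by omega)
    have h3 : m * ((n-m)/m) ≤ D.card := by
      rw [h1]
      calc m * ((n-m)/m) = ∑ _i ∈ Finset.range m, (n-m)/m := by
            rw [Finset.sum_const, Finset.card_range]; ring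
        _ ≤ _ := Finset.sum_le_sum h2
    have h4 : n - m - (m-1) ≤ m * ((n-m)/m) := by
      have e5 := Nat.mod_lt (n-m) (show 0 < m by omega)
      have e6 := Nat.div_add_mod (n-m) m
      omega
    omega
  -- sum over D equals sum over I
  have hsum1 : ∑ i ∈ Finset.range m, ∑ j ∈ Finset.range ((n-i)/m), φ (i + j*m)
      = ∑ k ∈ I, φ k := by
    rw [hI, Finset.sum_image hinj]
    rw [hD, Finset.sum_sigma]
  rw [hsum1]
  have hsplit : ∑ k ∈ Finset.range n \ I, φ k + ∑ k ∈ I, φ k = ∑ k ∈ Finset.range n, φ k :=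
    Finset.sum_sdiff hsub
  have hbound : -(∑ k ∈ Finset.range n \ I, φ k) ≤ 2*(m:ℝ)*F := by
    have h1 : -(∑ k ∈ Finset.range n \ I, φ k) = ∑ k ∈ Finset.range n \ I, -φ k := by
      rw [Finset.sum_neg_distrib]
    rw [h1]
    have h2 : ∑ k ∈ Finset.range n \ I, -φ k ≤ ∑ _k ∈ Finset.range n \ I, F :=
      Finset.sum_le_sum (fun k _ => le_trans (neg_le_abs _) (hφ k))
    have h3 : ((Finset.range n \ I).card : ℝ) ≤ 2*m := by
      have : (Finset.range n \ I).card = n - I.card := by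
        rw [Finset.card_sdiff_of_subset hsub, Finset.card_range]
      rw [this]
      have : n - I.card ≤ 2*m := by omega
      exact_mod_cast this
    calc ∑ k ∈ Finset.range n \ I, -φ k ≤ ((Finset.range n \ I).card : ℝ) * F := by
          rw [Finset.sum_const] at h2; simpa [nsmul_eq_mul] using h2
      _ ≤ 2*(m:ℝ)*F := by nlinarith
  linarith


section AuxCocycle
section
variable (T : Ω ≃ₜ Ω) (A : Ω → Matrix (Fin 2) (Fin 2) ℝ)

lemma cocPg_add (p q : ℕ) (ω : Ω) :
    cocPg T A (p + q) ω = cocPg T A q ((⇑T)^[p] ω) * cocPg T A p ω := by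
  induction q with
  | zero => simp [cocPg]
  | succ q ih =>
      have h1 : p + (q + 1) = (p + q) + 1 := by ring
      rw [h1]
      show A ((⇑T)^[p+q] ω) * cocPg T A (p+q) ω = _
      rw [ih]
      have h2 : (⇑T)^[p + q] ω = (⇑T)^[q] ((⇑T)^[p] ω) := by
        rw [add_comm p q, Function.iterate_add_apply]
      rw [h2]
      show _ = (A ((⇑T)^[q] ((⇑T)^[p] ω)) * cocPg T A q ((⇑T)^[p] ω)) * cocPg T A p ω
      rw [mul_assoc]

lemma isUnit_cocPg (hA : ∀ ω, IsUnit (A ω)) (n : ℕ) (ω : Ω) : IsUnit (cocPg T A n ω) := by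
  induction n with
  | zero => simp [cocPg]
  | succ n ih => exact (hA _).mul ih

lemma continuous_cocPg (hA : Continuous A) (n : ℕ) : Continuous (fun ω => cocPg T A n ω) := by
  induction n with
  | zero => simpa [cocPg] using continuous_const
  | succ n ih =>
      show Continuous fun ω => A ((⇑T)^[n] ω) * cocPg T A n ω
      exact (hA.comp (T.continuous.iterate n)).mul ih

/-- abbreviation for the log norms -/
noncomputable def lognrm (n : ℕ) (ω : Ω) : ℝ := Real.log (opNorm (cocPg T A n ω))

lemma lognrm_subadd (hA : ∀ ω, IsUnit (A ω)) (p q : ℕ) (ω : Ω) :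
    lognrm T A (p + q) ω ≤ lognrm T A p ω + lognrm T A q ((⇑T)^[p] ω) := by
  unfold lognrm
  rw [cocPg_add]
  calc Real.log (opNorm (cocPg T A q ((⇑T)^[p] ω) * cocPg T A p ω))
      ≤ Real.log (opNorm (cocPg T A q ((⇑T)^[p] ω)) * opNorm (cocPg T A p ω)) := by
        apply Real.log_le_log (opNorm_pos ((isUnit_cocPg T A hA q _).mul (isUnit_cocPg T A hA p _)))
        exact opNorm_mul_le _ _
    _ = _ := by
        rw [Real.log_mul (ne_of_gt (opNorm_pos (isUnit_cocPg T A hA q _)))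
          (ne_of_gt (opNorm_pos (isUnit_cocPg T A hA p _)))]
        ring

lemma lognrm_zero (ω : Ω) : lognrm T A 0 ω = 0 := by
  unfold lognrm; show Real.log (opNorm 1) = 0; rw [opNorm_one, Real.log_one]

lemma continuous_lognrm (hAc : Continuous A) (hA : ∀ ω, IsUnit (A ω)) (n : ℕ) :
    Continuous (lognrm T A n) := by
  apply Continuous.log
  · exact continuous_opNorm.comp (continuous_cocPg T A hAc n)
  · intro ω
    exact ne_of_gt (opNorm_pos (isUnit_cocPg T A hA n ω))

end

section
variable (T : Ω ≃ₜ Ω) (A : Ω → Matrix (Fin 2) (Fin 2) ℝ)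

lemma lognrm_le_lin (hA : ∀ ω, IsUnit (A ω)) {C : ℝ} (hC0 : 0 ≤ C)
    (hC : ∀ ω, lognrm T A 1 ω ≤ C) (n : ℕ) (ω : Ω) : lognrm T A n ω ≤ n * C := by
  induction n generalizing ω with
  | zero => rw [lognrm_zero]; simp
  | succ n ih =>
      calc lognrm T A (n+1) ω ≤ lognrm T A n ω + lognrm T A 1 ((⇑T)^[n] ω) :=
            lognrm_subadd T A hA n 1 ω
        _ ≤ n * C + C := add_le_add (ih ω) (hC _)
        _ = (n+1 : ℕ) * C := by push_cast; ring

lemma lognrm_chain (hA : ∀ ω, IsUnit (A ω)) (m : ℕ) :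
    ∀ (q s : ℕ) (ω : Ω), lognrm T A (q*m + s) ω
      ≤ (∑ j ∈ Finset.range q, lognrm T A m ((⇑T)^[j*m] ω)) + lognrm T A s ((⇑T)^[q*m] ω) := by
  intro q
  induction q with
  | zero => intro s ω; simp
  | succ q ih =>
      intro s ω
      have h1 : (q+1)*m + s = m + (q*m + s) := by ring
      rw [h1]
      calc lognrm T A (m + (q*m+s)) ω
          ≤ lognrm T A m ω + lognrm T A (q*m+s) ((⇑T)^[m] ω) := lognrm_subadd T A hA m _ ω
        _ ≤ lognrm T A m ω + ((∑ j ∈ Finset.range q, lognrm T A m ((⇑T)^[j*m] ((⇑T)^[m] ω)))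
              + lognrm T A s ((⇑T)^[q*m] ((⇑T)^[m] ω))) := by
            exact add_le_add_right (ih s ((⇑T)^[m] ω)) _
        _ = _ := by
            have h2 : ∀ j : ℕ, (⇑T)^[j*m] ((⇑T)^[m] ω) = (⇑T)^[j*m + m] ω := by
              intro j; rw [Function.iterate_add_apply]
            have h3 : (⇑T)^[q*m] ((⇑T)^[m] ω) = (⇑T)^[(q+1)*m] ω := by
              rw [h2 q]; ring_nf
            rw [h3]
            have h4 : ∑ j ∈ Finset.range (q+1), lognrm T A m ((⇑T)^[j*m] ω)
                = (∑ j ∈ Finset.range q, lognrm T A m ((⇑T)^[(j+1)*m] ω))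
                  + lognrm T A m ((⇑T)^[0*m] ω) := Finset.sum_range_succ' _ _
            rw [h4]
            simp only [zero_mul, Function.iterate_zero_apply]
            have h5 : ∀ j ∈ Finset.range q,
                lognrm T A m ((⇑T)^[j*m] ((⇑T)^[m] ω)) = lognrm T A m ((⇑T)^[(j+1)*m] ω) := by
              intro j _
              rw [h2 j]; ring_nf
            rw [Finset.sum_congr rfl h5]
            ring

lemma stepB (hA : ∀ ω, IsUnit (A ω)) {C F : ℝ} (hC0 : 0 ≤ C)
    (hC : ∀ ω, lognrm T A 1 ω ≤ C) (m : ℕ) (hF : ∀ ω, |lognrm T A m ω| ≤ F)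
    (n : ℕ) (hm : 1 ≤ m) (hn : 2*m ≤ n) (ω : Ω) :
    (m:ℝ) * lognrm T A n ω
      ≤ (∑ k ∈ Finset.range n, lognrm T A m ((⇑T)^[k] ω)) + 2*m*F + 2*m^2*C := by
  have hper : ∀ i, i < m → lognrm T A n ω
      ≤ 2*m*C + ∑ j ∈ Finset.range ((n-i)/m), lognrm T A m ((⇑T)^[i + j*m] ω) := by
    intro i hi
    set q := (n-i)/m with hq
    set s := (n-i)%m with hs
    have hdm : q*m + s = n - i := by rw [hq, hs, mul_comm]; exact Nat.div_add_mod _ _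
    have hni : n = i + (q*m + s) := by omega
    have h0 : lognrm T A n ω ≤ lognrm T A i ω + lognrm T A (q*m+s) ((⇑T)^[i] ω) := by
      conv_lhs => rw [hni]
      exact lognrm_subadd T A hA i _ ω
    have h1 : lognrm T A i ω ≤ m*C := by
      calc lognrm T A i ω ≤ i*C := lognrm_le_lin T A hA hC0 hC i ω
        _ ≤ m*C := by
          have : (i:ℝ) ≤ m := by exact_mod_cast le_of_lt hi
          nlinarith
    have h2 := lognrm_chain T A hA m q s ((⇑T)^[i] ω)
    have h3 : lognrm T A s ((⇑T)^[q*m] ((⇑T)^[i] ω)) ≤ m*C := by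
      have hsm : s < m := Nat.mod_lt _ (by omega)
      calc lognrm T A s _ ≤ s*C := lognrm_le_lin T A hA hC0 hC s _
        _ ≤ m*C := by
          have : (s:ℝ) ≤ m := by exact_mod_cast le_of_lt hsm
          nlinarith
    have h4 : ∀ j ∈ Finset.range q, lognrm T A m ((⇑T)^[j*m] ((⇑T)^[i] ω))
        = lognrm T A m ((⇑T)^[i + j*m] ω) := by
      intro j _
      rw [← Function.iterate_add_apply]
      ring_nf
    calc lognrm T A n ω ≤ lognrm T A i ω + lognrm T A (q*m+s) ((⇑T)^[i] ω) := h0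
      _ ≤ m*C + ((∑ j ∈ Finset.range q, lognrm T A m ((⇑T)^[j*m] ((⇑T)^[i] ω)))
            + lognrm T A s ((⇑T)^[q*m] ((⇑T)^[i] ω))) := add_le_add h1 h2
      _ ≤ m*C + ((∑ j ∈ Finset.range q, lognrm T A m ((⇑T)^[i + j*m] ω)) + m*C) := by
          rw [Finset.sum_congr rfl h4]
          exact add_le_add_right (add_le_add_right h3 _) _
      _ = 2*m*C + ∑ j ∈ Finset.range q, lognrm T A m ((⇑T)^[i + j*m] ω) := by ring
  have hsum : (m:ℝ) * lognrm T A n ω = ∑ _i ∈ Finset.range m, lognrm T A n ω := by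
    rw [Finset.sum_const, Finset.card_range, nsmul_eq_mul]
  rw [hsum]
  calc ∑ i ∈ Finset.range m, lognrm T A n ω
      ≤ ∑ i ∈ Finset.range m,
          (2*m*C + ∑ j ∈ Finset.range ((n-i)/m), lognrm T A m ((⇑T)^[i + j*m] ω)) := by
        apply Finset.sum_le_sum
        intro i hi
        exact hper i (Finset.mem_range.mp hi)
    _ = 2*m^2*C + ∑ i ∈ Finset.range m,
          ∑ j ∈ Finset.range ((n-i)/m), lognrm T A m ((⇑T)^[i + j*m] ω) := by
        rw [Finset.sum_add_distrib, Finset.sum_const, Finset.card_range, nsmul_eq_mul]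
        ring
    _ ≤ 2*m^2*C + ((∑ k ∈ Finset.range n, lognrm T A m ((⇑T)^[k] ω)) + 2*m*F) := by
        apply add_le_add_right
        exact double_sum_le (fun k => lognrm T A m ((⇑T)^[k] ω)) F (fun k => hF _) m n hm hn
    _ = _ := by ring
end

end AuxCocycle

section AuxMeasure
lemma trunc_sum_eq (δ : ℝ) (hδ : 0 ≤ δ) (t : ℝ) (ht : 0 ≤ t) (M : ℕ) :
    ∑ i ∈ Finset.range M, min (max (t - δ*i) 0) δ = min t (δ*M) := by
  induction M with
  | zero => simp [ht]
  | succ M ih =>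
      rw [Finset.sum_range_succ, ih]
      rcases le_total t (δ*M) with h | h
      · have h1 : max (t - δ*M) 0 = 0 := max_eq_right (by linarith)
        have h2 : min t (δ*M) = t := min_eq_left h
        have h3 : min t (δ*(M+1:ℕ)) = t := min_eq_left (by push_cast; nlinarith)
        rw [h1, h2, h3, min_eq_left hδ]; ring
      · have h1 : max (t - δ*M) 0 = t - δ*M := max_eq_left (by linarith)
        have h2 : min t (δ*M) = δ*M := min_eq_right h
        rw [h1, h2]
        have : δ*M + min (t - δ*M) δ = min t (δ*M + δ) := by
          rcases le_total (t - δ*M) δ with h4 | h4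
          · rw [min_eq_left h4, min_eq_left (by linarith)]; ring
          · rw [min_eq_right h4, min_eq_right (by linarith)]
        rw [this]; push_cast; ring_nf


lemma content_measure_univ (κ : MeasureTheory.Content Ω) :
    κ.measure Set.univ = κ ⟨Set.univ, isCompact_univ⟩ := by
  rw [MeasureTheory.Content.measure_apply _ MeasurableSet.univ]
  have h1 : κ.outerMeasure Set.univ = κ.innerContent ⟨Set.univ, isOpen_univ⟩ :=
    κ.outerMeasure_of_isOpen _ isOpen_univ
  rw [h1]
  apply le_antisymm
  · apply iSup_le; intro K; apply iSup_le; intro _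
    exact κ.mono _ _ (Set.subset_univ _)
  · exact κ.le_innerContent ⟨Set.univ, isCompact_univ⟩ ⟨Set.univ, isOpen_univ⟩ (subset_refl _)

lemma content_measure_map (κ : MeasureTheory.Content Ω) (T : Ω ≃ₜ Ω)
    (h : ∀ K : TopologicalSpace.Compacts Ω, (κ (K.map T T.continuous) : ℝ≥0∞) = κ K) :
    κ.measure.map T = κ.measure := by
  apply MeasureTheory.Measure.ext
  intro s hs
  rw [MeasureTheory.Measure.map_apply T.continuous.measurable hs,
    MeasureTheory.Content.measure_apply _ (hs.preimage T.continuous.measurable),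
    MeasureTheory.Content.measure_apply _ hs]
  exact κ.outerMeasure_preimage T h s

lemma content_le_measure_compacts (κ : MeasureTheory.Content Ω)
    (K : TopologicalSpace.Compacts Ω) : (κ K : ℝ≥0∞) ≤ κ.measure K := by
  rw [MeasureTheory.Content.measure_apply _ K.isCompact.isClosed.measurableSet]
  exact κ.le_outerMeasure_compacts K

lemma exists_inv_measure_of_functional (T : Ω ≃ₜ Ω)
    (L : (Ω →ᵇ ℝ) → ℝ)
    (hadd : ∀ f g, L (f + g) = L f + L g)
    (hsmul : ∀ (c : ℝ) (f), L (c • f) = c * L f)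
    (hone : L 1 = 1)
    (hpos : ∀ f, (∀ x, 0 ≤ f x) → 0 ≤ L f)
    (hinv : ∀ f : Ω →ᵇ ℝ, L (f.compContinuous (T : C(Ω, Ω))) = L f) :
    ∃ ν : Measure Ω, IsProbabilityMeasure ν ∧ ν.map T = ν ∧
      ∀ f : Ω →ᵇ ℝ, L f ≤ ∫ x, f x ∂ν := by
  classical
  have hmono : ∀ f g : Ω →ᵇ ℝ, (∀ x, f x ≤ g x) → L f ≤ L g := by
    intro f g h
    have h1 : L g = L f + L (g - f) := by
      rw [← hadd]; congr 1; abel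
    have h2 : 0 ≤ L (g - f) := hpos _ (fun x => by
      simp only [BoundedContinuousFunction.coe_sub, Pi.sub_apply, sub_nonneg]; exact h x)
    linarith
  have hzero : L 0 = 0 := by
    have := hsmul 0 0; simpa using this
  have hsumL : ∀ (M : ℕ) (F : ℕ → Ω →ᵇ ℝ),
      L (∑ i ∈ Finset.range M, F i) = ∑ i ∈ Finset.range M, L (F i) := by
    intro M F
    induction M with
    | zero => simpa using hzero
    | succ M ih => rw [Finset.sum_range_succ, Finset.sum_range_succ, hadd, ih]
  -- the content
  set compSet : Set Ω → Set (Ω →ᵇ ℝ) :=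
    fun K => {f | (∀ x, 0 ≤ f x) ∧ ∀ x ∈ K, 1 ≤ f x} with hcompSet
  set lam : Set Ω → ℝ := fun K => sInf (L '' compSet K) with hlam
  have h1mem : ∀ K, (1 : Ω →ᵇ ℝ) ∈ compSet K := by
    intro K; constructor <;> intros <;> simp
  have hne : ∀ K, (L '' compSet K).Nonempty := fun K => ⟨L 1, 1, h1mem K, rfl⟩
  have hbdd : ∀ K, BddBelow (L '' compSet K) := by
    rintro K
    refine ⟨0, ?_⟩
    rintro y ⟨f, hf, rfl⟩
    exact hpos f hf.1
  have lam_nonneg : ∀ K, 0 ≤ lam K := fun K => le_csInf (hne K) (by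
    rintro y ⟨f, hf, rfl⟩; exact hpos f hf.1)
  have lam_le : ∀ (K) (f), f ∈ compSet K → lam K ≤ L f := fun K f hf =>
    csInf_le (hbdd K) ⟨f, hf, rfl⟩
  have lam_le_one : ∀ K, lam K ≤ 1 := fun K => by
    have := lam_le K 1 (h1mem K); rwa [hone] at this
  have lam_mono : ∀ K K' : Set Ω, K ⊆ K' → lam K ≤ lam K' := by
    intro K K' h
    apply csInf_le_csInf (hbdd K) (hne K')
    apply Set.image_mono
    rintro f ⟨hf0, hf1⟩
    exact ⟨hf0, fun x hx => hf1 x (h hx)⟩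
  have lam_union_le : ∀ K₁ K₂ : Set Ω, lam (K₁ ∪ K₂) ≤ lam K₁ + lam K₂ := by
    intro K₁ K₂
    apply le_of_forall_pos_le_add
    intro δ hδ
    obtain ⟨y₁, ⟨f₁, hf₁, rfl⟩, hy₁⟩ :=
      exists_lt_of_csInf_lt (hne K₁) (lt_add_of_pos_right (lam K₁) (half_pos hδ))
    obtain ⟨y₂, ⟨f₂, hf₂, rfl⟩, hy₂⟩ :=
      exists_lt_of_csInf_lt (hne K₂) (lt_add_of_pos_right (lam K₂) (half_pos hδ))
    have hmem : f₁ + f₂ ∈ compSet (K₁ ∪ K₂) := by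
      constructor
      · intro x
        simp only [BoundedContinuousFunction.coe_add, Pi.add_apply]
        exact add_nonneg (hf₁.1 x) (hf₂.1 x)
      · rintro x (hx | hx)
        · simp only [BoundedContinuousFunction.coe_add, Pi.add_apply]
          have := hf₁.2 x hx; have := hf₂.1 x; linarith
        · simp only [BoundedContinuousFunction.coe_add, Pi.add_apply]
          have := hf₂.2 x hx; have := hf₁.1 x; linarith
    calc lam (K₁ ∪ K₂) ≤ L (f₁ + f₂) := lam_le _ _ hmem
      _ = L f₁ + L f₂ := hadd _ _
      _ ≤ lam K₁ + lam K₂ + δ := by linarith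
  have lam_disjoint : ∀ K₁ K₂ : Set Ω, Disjoint K₁ K₂ → IsClosed K₁ → IsClosed K₂ →
      lam K₁ + lam K₂ ≤ lam (K₁ ∪ K₂) := by
    intro K₁ K₂ hd h₁ h₂
    apply le_csInf (hne _)
    rintro y ⟨f, hf, rfl⟩
    obtain ⟨u, hu0, hu1, hu01⟩ := exists_continuous_zero_one_of_isClosed h₁ h₂ hd
    set u' := BoundedContinuousFunction.mkOfCompact u with hu'
    have key : L (f * (1 - u')) + L (f * u') = L f := by
      rw [← hadd]
      congr 1
      ext x
      simp only [BoundedContinuousFunction.coe_add, BoundedContinuousFunction.coe_mul,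
        BoundedContinuousFunction.coe_sub, BoundedContinuousFunction.coe_one, Pi.add_apply,
        Pi.mul_apply, Pi.sub_apply, Pi.one_apply]
      ring
    have hm₁ : f * (1 - u') ∈ compSet K₁ := by
      constructor
      · intro x
        have := (hu01 x).2
        have := hf.1 x
        simp only [BoundedContinuousFunction.coe_mul, BoundedContinuousFunction.coe_sub,
          BoundedContinuousFunction.coe_one, Pi.mul_apply, Pi.sub_apply, Pi.one_apply, hu',
          BoundedContinuousFunction.mkOfCompact_apply]
        nlinarith
      · intro x hx
        have h0 : u x = 0 := hu0 hx
        have := hf.2 x (Or.inl hx)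
        simp only [BoundedContinuousFunction.coe_mul, BoundedContinuousFunction.coe_sub,
          BoundedContinuousFunction.coe_one, Pi.mul_apply, Pi.sub_apply, Pi.one_apply, hu',
          BoundedContinuousFunction.mkOfCompact_apply, h0]
        linarith
    have hm₂ : f * u' ∈ compSet K₂ := by
      constructor
      · intro x
        have := (hu01 x).1
        have := hf.1 x
        simp only [BoundedContinuousFunction.coe_mul, Pi.mul_apply, hu',
          BoundedContinuousFunction.mkOfCompact_apply]
        nlinarith
      · intro x hx
        have h0 : u x = 1 := hu1 hx
        have := hf.2 x (Or.inr hx)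
        simp only [BoundedContinuousFunction.coe_mul, Pi.mul_apply, hu',
          BoundedContinuousFunction.mkOfCompact_apply, h0]
        linarith
    calc lam K₁ + lam K₂ ≤ L (f * (1 - u')) + L (f * u') :=
          add_le_add (lam_le _ _ hm₁) (lam_le _ _ hm₂)
      _ = L f := key
  -- the bundled content
  obtain ⟨κ, hκtoFun⟩ : ∃ κ : MeasureTheory.Content Ω,
      ∀ K : TopologicalSpace.Compacts Ω, κ.toFun K = Real.toNNReal (lam (↑K : Set Ω)) := by
    refine ⟨{ toFun := fun K => Real.toNNReal (lam (↑K : Set Ω))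
              mono' := fun K₁ K₂ h => Real.toNNReal_mono (lam_mono _ _ h)
              sup_disjoint' := ?_
              sup_le' := ?_ }, fun K => rfl⟩
    · intro K₁ K₂ hd hc₁ hc₂
      have heq : lam ((↑K₁ : Set Ω) ∪ ↑K₂) = lam ↑K₁ + lam ↑K₂ :=
        le_antisymm (lam_union_le _ _) (lam_disjoint _ _ hd hc₁ hc₂)
      have hco : (↑(K₁ ⊔ K₂) : Set Ω) = ↑K₁ ∪ ↑K₂ := rfl
      rw [hco, heq, Real.toNNReal_add (lam_nonneg _) (lam_nonneg _)]
    · intro K₁ K₂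
      have hco : (↑(K₁ ⊔ K₂) : Set Ω) = ↑K₁ ∪ ↑K₂ := rfl
      calc Real.toNNReal (lam ↑(K₁ ⊔ K₂)) ≤ Real.toNNReal (lam ↑K₁ + lam ↑K₂) := by
            apply Real.toNNReal_mono; rw [hco]; exact lam_union_le _ _
        _ ≤ _ := Real.toNNReal_add_le
  set ν : Measure Ω := κ.measure with hν
  have hκ_apply : ∀ K : TopologicalSpace.Compacts Ω, (κ K : ℝ≥0∞) = ENNReal.ofReal (lam (↑K : Set Ω)) := by
    intro K
    have := hκtoFun K
    rw [MeasureTheory.Content.toFun_eq_toNNReal_apply] at this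
    rw [← ENNReal.coe_toNNReal κ.apply_ne_top, this]
    rfl
  -- total mass
  have lam_univ : lam Set.univ = 1 := by
    apply le_antisymm (lam_le_one _)
    apply le_csInf (hne _)
    rintro y ⟨f, hf, rfl⟩
    have := hmono 1 f (fun x => by simpa using hf.2 x (Set.mem_univ x))
    rwa [hone] at this
  have hν_univ : ν Set.univ = 1 := by
    rw [hν, content_measure_univ κ, hκ_apply]
    simp only [TopologicalSpace.Compacts.coe_mk]
    rw [lam_univ]
    simp
  have hν_prob : IsProbabilityMeasure ν := ⟨hν_univ⟩
  -- invariance of the content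
  have hcontent_inv : ∀ K : TopologicalSpace.Compacts Ω,
      (κ (K.map T T.continuous) : ℝ≥0∞) = κ K := by
    intro K
    rw [hκ_apply, hκ_apply]
    congr 1
    have himg : L '' compSet (↑(K.map T T.continuous)) = L '' compSet ↑K := by
      apply le_antisymm
      · rintro y ⟨f, hf, rfl⟩
        refine ⟨f.compContinuous (T : C(Ω, Ω)), ⟨fun x => hf.1 _, fun x hx => ?_⟩, hinv f⟩
        exact hf.2 (T x) (Set.mem_image_of_mem T hx)
      · rintro y ⟨f, hf, rfl⟩
        set h := f.compContinuous (T.symm : C(Ω, Ω)) with hh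
        have hcomp : h.compContinuous (T : C(Ω, Ω)) = f := by
          ext x
          simp [hh]
        refine ⟨h, ⟨fun x => hf.1 _, ?_⟩, ?_⟩
        · rintro y ⟨x, hx, rfl⟩
          have : h (T x) = f x := by simp [hh]
          rw [this]
          exact hf.2 x hx
        · rw [← hinv h, hcomp]
    simp only [hlam]
    rw [himg]
  have hν_inv : ν.map T = ν := content_measure_map κ T hcontent_inv
  haveI := hν_prob
  -- key bound for nonnegative functions
  have key0 : ∀ f : Ω →ᵇ ℝ, (∀ x, 0 ≤ f x) → L f ≤ ∫ x, f x ∂ν := by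
    intro f hf
    apply le_of_forall_pos_le_add
    intro δ hδ
    obtain ⟨M₀, hM₀⟩ := exists_nat_ge (‖f‖ / δ)
    set M := M₀ + 1 with hM
    have hM1 : 1 ≤ M := Nat.le_add_left 1 M₀
    have hfM : ∀ x, f x ≤ δ * M := by
      intro x
      have h1 : f x ≤ ‖f‖ := le_trans (le_abs_self _) (f.norm_coe_le_norm x)
      have h2 : ‖f‖ ≤ M₀ * δ := (div_le_iff₀ hδ).mp hM₀
      have h3 : (M₀:ℝ) * δ ≤ δ * M := by
        rw [hM]; push_cast; nlinarith
      linarith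
    set Ki : ℕ → Set Ω := fun i => {x | δ * i ≤ f x} with hKi
    have hKiclosed : ∀ i, IsClosed (Ki i) := fun i =>
      isClosed_le continuous_const f.continuous
    set fi : ℕ → Ω →ᵇ ℝ := fun i => BoundedContinuousFunction.mkOfCompact
      ⟨fun x => min (max (f x - δ*i) 0) δ,
        Continuous.min ((f.continuous.sub continuous_const).max continuous_const)
          continuous_const⟩ with hfi
    have hfi_apply : ∀ i x, fi i x = min (max (f x - δ*i) 0) δ := fun i x => rfl
    have hsum_eq : ∀ x, f x = ∑ i ∈ Finset.range M, fi i x := by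
      intro x
      have h1 := trunc_sum_eq δ hδ.le (f x) (hf x) M
      have h2 : ∑ i ∈ Finset.range M, fi i x
          = ∑ i ∈ Finset.range M, min (max (f x - δ*i) 0) δ := by
        apply Finset.sum_congr rfl; intro i _; exact hfi_apply i x
      rw [h2, h1, min_eq_left (hfM x)]
    have hLsplit : L f = ∑ i ∈ Finset.range M, L (fi i) := by
      rw [← hsumL M fi]
      congr 1
      ext x
      rw [BoundedContinuousFunction.coe_sum, Finset.sum_apply]
      exact hsum_eq x
    have hstep3 : ∀ i, L (fi i) ≤ δ * lam (Ki i) := by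
      intro i
      have h1 : ∀ φ ∈ compSet (Ki i), L (fi i) ≤ δ * L φ := by
        intro φ hφ
        have hp : ∀ x, fi i x ≤ (δ • φ) x := by
          intro x
          simp only [BoundedContinuousFunction.coe_smul, Pi.smul_apply, smul_eq_mul,
            hfi_apply]
          rcases le_or_gt (δ * i) (f x) with h | h
          · have hφx : 1 ≤ φ x := hφ.2 x h
            calc min (max (f x - δ*i) 0) δ ≤ δ := min_le_right _ _
              _ ≤ δ * φ x := by nlinarith
          · have h2 : max (f x - δ*i) 0 = 0 := max_eq_right (by linarith)
            rw [h2, min_eq_left hδ.le]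
            have := hφ.1 x
            positivity
        calc L (fi i) ≤ L (δ • φ) := hmono _ _ hp
          _ = δ * L φ := hsmul δ φ
      have h2 : L (fi i) / δ ≤ lam (Ki i) := by
        apply le_csInf (hne _)
        rintro y ⟨φ, hφ, rfl⟩
        rw [div_le_iff₀ hδ]
        calc L (fi i) ≤ δ * L φ := h1 φ hφ
          _ = L φ * δ := mul_comm _ _
      calc L (fi i) = (L (fi i) / δ) * δ := by field_simp
        _ ≤ lam (Ki i) * δ := mul_le_mul_of_nonneg_right h2 hδ.le
        _ = δ * lam (Ki i) := mul_comm _ _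
    have hstep4 : ∀ i, lam (Ki i) ≤ (ν (Ki i)).toReal := by
      intro i
      have h2 := content_le_measure_compacts κ ⟨Ki i, (hKiclosed i).isCompact⟩
      rw [hκ_apply] at h2
      simp only [TopologicalSpace.Compacts.coe_mk] at h2
      rw [← hν] at h2
      have h3 : ν (Ki i) ≠ ⊤ := measure_ne_top ν _
      calc lam (Ki i) = (ENNReal.ofReal (lam (Ki i))).toReal :=
            (ENNReal.toReal_ofReal (lam_nonneg _)).symm
        _ ≤ (ν (Ki i)).toReal := ENNReal.toReal_mono h3 h2
    have hmeas : ∀ i, MeasurableSet (Ki i) := fun i => (hKiclosed i).measurableSet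
    have hstep5 : ∑ i ∈ Finset.Ico 1 M, δ * (ν (Ki i)).toReal ≤ ∫ x, f x ∂ν := by
      have hSint : ∀ i, ∫ x, (Ki i).indicator (fun _ => δ) x ∂ν = δ * (ν (Ki i)).toReal := by
        intro i
        rw [MeasureTheory.integral_indicator_const _ (hmeas i)]
        rw [smul_eq_mul, mul_comm]
        rfl
      have hintg : ∀ i, MeasureTheory.Integrable ((Ki i).indicator (fun _ => δ)) ν :=
        fun i => (MeasureTheory.integrable_const δ).indicator (hmeas i)
      have hptwise : ∀ x, ∑ i ∈ Finset.Ico 1 M, (Ki i).indicator (fun _ => δ) x ≤ f x := by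
        intro x
        classical
        have h1 : ∑ i ∈ Finset.Ico 1 M, (Ki i).indicator (fun _ => δ) x
            = ∑ i ∈ (Finset.Ico 1 M).filter (fun i => x ∈ Ki i), δ := by
          rw [Finset.sum_filter]
          apply Finset.sum_congr rfl
          intro i _
          rw [Set.indicator_apply]
        set s := (Finset.Ico 1 M).filter (fun i => x ∈ Ki i) with hs
        rw [h1, Finset.sum_const, nsmul_eq_mul]
        by_cases hcard : s.Nonempty
        · set i₀ := s.max' hcard with hi₀def
          have hi₀ : i₀ ∈ s := s.max'_mem hcard
          have h2 : δ * i₀ ≤ f x := (Finset.mem_filter.mp hi₀).2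
          have h3 : s.card ≤ i₀ := by
            have hsub : s ⊆ Finset.Icc 1 i₀ := by
              intro j hj
              exact Finset.mem_Icc.mpr ⟨(Finset.mem_Ico.mp (Finset.mem_filter.mp hj).1).1,
                Finset.le_max' s j hj⟩
            calc s.card ≤ (Finset.Icc 1 i₀).card := Finset.card_le_card hsub
              _ = i₀ := by rw [Nat.card_Icc]; omega
          have h4 : (s.card : ℝ) ≤ (i₀ : ℝ) := by exact_mod_cast h3
          nlinarith
        · rw [Finset.not_nonempty_iff_eq_empty] at hcard
          rw [hcard]
          simpa using hf x
      calc ∑ i ∈ Finset.Ico 1 M, δ * (ν (Ki i)).toReal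
          = ∑ i ∈ Finset.Ico 1 M, ∫ x, (Ki i).indicator (fun _ => δ) x ∂ν := by
            apply Finset.sum_congr rfl; intro i _; rw [hSint i]
        _ = ∫ x, ∑ i ∈ Finset.Ico 1 M, (Ki i).indicator (fun _ => δ) x ∂ν :=
            (MeasureTheory.integral_finset_sum _ (fun i _ => hintg i)).symm
        _ ≤ ∫ x, f x ∂ν := by
            apply MeasureTheory.integral_mono
              (MeasureTheory.integrable_finset_sum _ (fun i _ => hintg i))
              (f.integrable ν) hptwise
    have hsplitrange : Finset.range M = insert 0 (Finset.Ico 1 M) := by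
      ext k; simp only [Finset.mem_range, Finset.mem_insert, Finset.mem_Ico]; omega
    calc L f = ∑ i ∈ Finset.range M, L (fi i) := hLsplit
      _ ≤ ∑ i ∈ Finset.range M, δ * lam (Ki i) :=
          Finset.sum_le_sum (fun i _ => hstep3 i)
      _ = δ * lam (Ki 0) + ∑ i ∈ Finset.Ico 1 M, δ * lam (Ki i) := by
          rw [hsplitrange, Finset.sum_insert (by simp)]
      _ ≤ δ * 1 + ∑ i ∈ Finset.Ico 1 M, δ * (ν (Ki i)).toReal := by
          apply add_le_add
          · exact mul_le_mul_of_nonneg_left (lam_le_one _) hδ.le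
          · exact Finset.sum_le_sum (fun i _ =>
              mul_le_mul_of_nonneg_left (hstep4 i) hδ.le)
      _ ≤ ∫ x, f x ∂ν + δ := by
          rw [mul_one]
          linarith [hstep5]
  -- conclusion
  refine ⟨ν, hν_prob, hν_inv, ?_⟩
  intro f
  have hconst : ∀ c : ℝ, L (BoundedContinuousFunction.const Ω c) = c := by
    intro c
    have h1 : BoundedContinuousFunction.const Ω c = c • (1 : Ω →ᵇ ℝ) := by
      ext x; simp
    rw [h1, hsmul, hone, mul_one]
  have h1 : ∀ x, 0 ≤ (f + BoundedContinuousFunction.const Ω ‖f‖) x := by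
    intro x
    have h2 : |f x| ≤ ‖f‖ := by
      have := f.norm_coe_le_norm x
      simpa using this
    simp only [BoundedContinuousFunction.coe_add, Pi.add_apply,
      BoundedContinuousFunction.const_apply]
    have := abs_le.mp h2
    linarith [this.1]
  have h2 := key0 _ h1
  have h3 : L (f + BoundedContinuousFunction.const Ω ‖f‖) = L f + ‖f‖ := by
    rw [hadd, hconst]
  have h4 : ∫ x, (f + BoundedContinuousFunction.const Ω ‖f‖) x ∂ν
      = (∫ x, f x ∂ν) + ‖f‖ := by
    have h5 : ∀ x, (f + BoundedContinuousFunction.const Ω ‖f‖) x = f x + ‖f‖ := by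
      intro x; simp
    rw [MeasureTheory.integral_congr_ae (Filter.Eventually.of_forall h5)]
    rw [MeasureTheory.integral_add (f.integrable ν) (MeasureTheory.integrable_const _)]
    simp [MeasureTheory.integral_const]
  rw [h3, h4] at h2
  linarith


lemma unif_birkhoff_upper (T : Ω ≃ₜ Ω) (μ : Measure Ω)
    (hprob : IsProbabilityMeasure μ)
    (huniq : ∀ ν : Measure Ω, IsProbabilityMeasure ν → ν.map T = ν → ν = μ)
    (g : Ω →ᵇ ℝ) {ε : ℝ} (hε : 0 < ε) :
    ∃ N : ℕ, ∀ n, N ≤ n → ∀ ω : Ω,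
      (1/(n:ℝ)) * ∑ k ∈ Finset.range n, g ((⇑T)^[k] ω) ≤ (∫ x, g x ∂μ) + ε := by
  by_contra hcon
  push_neg at hcon
  choose nn hnn ωω hωω using hcon
  set E : (Ω →ᵇ ℝ) → ℕ → ℝ := fun f j =>
    (1/(nn j : ℝ)) * ∑ k ∈ Finset.range (nn j), f ((⇑T)^[k] (ωω j)) with hE
  have hEabs : ∀ (f : Ω →ᵇ ℝ) (j), |E f j| ≤ ‖f‖ := by
    intro f j
    rcases Nat.eq_zero_or_pos (nn j) with h | h
    · rw [hE]; dsimp only; rw [h]; simpa using norm_nonneg f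
    · have h1 : |∑ k ∈ Finset.range (nn j), f ((⇑T)^[k] (ωω j))| ≤ (nn j : ℝ) * ‖f‖ := by
        calc |∑ k ∈ Finset.range (nn j), f ((⇑T)^[k] (ωω j))|
            ≤ ∑ k ∈ Finset.range (nn j), |f ((⇑T)^[k] (ωω j))| := Finset.abs_sum_le_sum_abs _ _
          _ ≤ ∑ _k ∈ Finset.range (nn j), ‖f‖ := by
              apply Finset.sum_le_sum
              intro k _
              have := f.norm_coe_le_norm ((⇑T)^[k] (ωω j))
              simpa using this
          _ = (nn j : ℝ) * ‖f‖ := by rw [Finset.sum_const, Finset.card_range, nsmul_eq_mul]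
      have hnne : (nn j : ℝ) ≠ 0 := by positivity
      rw [hE]; dsimp only
      rw [abs_mul, abs_of_nonneg (by positivity : (0:ℝ) ≤ 1/(nn j:ℝ))]
      calc 1/(nn j:ℝ) * |∑ k ∈ Finset.range (nn j), f ((⇑T)^[k] (ωω j))|
          ≤ 1/(nn j:ℝ) * ((nn j : ℝ) * ‖f‖) := by
            apply mul_le_mul_of_nonneg_left h1 (by positivity)
        _ = ‖f‖ := by field_simp
  set 𝒰 : Ultrafilter ℕ := Ultrafilter.of Filter.atTop with h𝒰def
  have h𝒰 : (𝒰 : Filter ℕ) ≤ Filter.atTop := Ultrafilter.of_le _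
  have hnntop : Filter.Tendsto nn (𝒰 : Filter ℕ) Filter.atTop :=
    (Filter.tendsto_atTop_mono hnn Filter.tendsto_id).mono_left h𝒰
  have hlim : ∀ f : Ω →ᵇ ℝ, ∃ x, Filter.Tendsto (E f) (𝒰 : Filter ℕ) (𝓝 x) := by
    intro f
    obtain ⟨x, -, hx⟩ := (isCompact_Icc (a := -‖f‖) (b := ‖f‖)).ultrafilter_le_nhds
      (𝒰.map (E f)) (by
        rw [Ultrafilter.coe_map, Filter.le_principal_iff, Filter.mem_map]
        apply Filter.univ_mem'
        intro j
        exact Set.mem_Icc.mpr (abs_le.mp (hEabs f j)))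
    exact ⟨x, hx⟩
  choose L hL using hlim
  have hadd : ∀ f g : Ω →ᵇ ℝ, L (f + g) = L f + L g := by
    intro f g
    refine tendsto_nhds_unique (hL _) ?_
    have h2 : E (f + g) = fun j => E f j + E g j := by
      funext j
      rw [hE]; dsimp only
      rw [← mul_add, ← Finset.sum_add_distrib]
      rfl
    rw [h2]
    exact (hL f).add (hL g)
  have hsmul : ∀ (c : ℝ) (f : Ω →ᵇ ℝ), L (c • f) = c * L f := by
    intro c f
    refine tendsto_nhds_unique (hL _) ?_
    have h2 : E (c • f) = fun j => c * E f j := by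
      funext j
      rw [hE]; dsimp only
      have h3 : ∑ k ∈ Finset.range (nn j), (c • f) ((⇑T)^[k] (ωω j))
          = c * ∑ k ∈ Finset.range (nn j), f ((⇑T)^[k] (ωω j)) := by
        rw [Finset.mul_sum]
        apply Finset.sum_congr rfl
        intro k _
        simp
      rw [h3]
      ring
    rw [h2]
    exact (hL f).const_mul c
  have hone : L 1 = 1 := by
    refine tendsto_nhds_unique (hL _) ?_
    have h2 : ∀ᶠ j in (𝒰 : Filter ℕ), E 1 j = 1 := by
      filter_upwards [h𝒰 (Filter.eventually_ge_atTop 1)] with j hj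
      have hj' : 1 ≤ nn j := le_trans hj (hnn j)
      have hnne : (nn j : ℝ) ≠ 0 := by positivity
      rw [hE]; dsimp only
      simp only [BoundedContinuousFunction.coe_one, Pi.one_apply, Finset.sum_const,
        Finset.card_range, nsmul_eq_mul, mul_one]
      field_simp
    exact Filter.Tendsto.congr' (Filter.EventuallyEq.symm h2) tendsto_const_nhds
  have hpos : ∀ f : Ω →ᵇ ℝ, (∀ x, 0 ≤ f x) → 0 ≤ L f := by
    intro f hf
    apply ge_of_tendsto (hL f)
    apply Filter.Eventually.of_forall
    intro j
    rw [hE]; dsimp only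
    apply mul_nonneg (by positivity)
    exact Finset.sum_nonneg (fun k _ => hf _)
  have hinv : ∀ f : Ω →ᵇ ℝ, L (f.compContinuous (T : C(Ω, Ω))) = L f := by
    intro f
    refine tendsto_nhds_unique (hL _) ?_
    set d : ℕ → ℝ := fun j =>
      (1/(nn j : ℝ)) * (f ((⇑T)^[nn j] (ωω j)) - f (ωω j)) with hd
    have h2 : E (f.compContinuous (T : C(Ω, Ω))) = fun j => E f j + d j := by
      funext j
      rw [hE]; dsimp only
      rw [hd]; dsimp only
      rw [← mul_add]
      congr 1
      have h3 : ∀ k, (f.compContinuous (T : C(Ω, Ω))) ((⇑T)^[k] (ωω j))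
          = f ((⇑T)^[k+1] (ωω j)) := by
        intro k
        rw [BoundedContinuousFunction.compContinuous_apply]
        congr 1
        show T ((⇑T)^[k] (ωω j)) = (⇑T)^[k+1] (ωω j)
        rw [Function.iterate_succ_apply']
      rw [Finset.sum_congr rfl (fun k _ => h3 k)]
      have h4 : ∑ k ∈ Finset.range (nn j + 1), f ((⇑T)^[k] (ωω j))
          = (∑ k ∈ Finset.range (nn j), f ((⇑T)^[k+1] (ωω j))) + f ((⇑T)^[0] (ωω j)) :=
        Finset.sum_range_succ' _ _
      have h5 : ∑ k ∈ Finset.range (nn j + 1), f ((⇑T)^[k] (ωω j))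
          = (∑ k ∈ Finset.range (nn j), f ((⇑T)^[k] (ωω j))) + f ((⇑T)^[nn j] (ωω j)) :=
        Finset.sum_range_succ _ _
      simp only [Function.iterate_zero_apply] at h4
      linarith
    rw [h2]
    have h6 : Filter.Tendsto d (𝒰 : Filter ℕ) (𝓝 0) := by
      apply squeeze_zero_norm (a := fun j => (2*‖f‖) * (1/(nn j:ℝ)))
      · intro j
        rw [hd]; dsimp only
        rw [norm_mul]
        rw [Real.norm_of_nonneg (by positivity : (0:ℝ) ≤ 1/(nn j:ℝ))]
        rw [mul_comm]
        apply mul_le_mul_of_nonneg_right _ (by positivity)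
        calc ‖f ((⇑T)^[nn j] (ωω j)) - f (ωω j)‖
            ≤ ‖f ((⇑T)^[nn j] (ωω j))‖ + ‖f (ωω j)‖ := norm_sub_le _ _
          _ ≤ ‖f‖ + ‖f‖ := add_le_add (f.norm_coe_le_norm _) (f.norm_coe_le_norm _)
          _ = 2*‖f‖ := by ring
      · have h7 : Filter.Tendsto (fun n : ℕ => 1/(n:ℝ)) Filter.atTop (𝓝 0) :=
          tendsto_one_div_atTop_nhds_zero_nat
        have h8 := (h7.comp hnntop).const_mul (2*‖f‖)
        simpa using h8
    have h9 := (hL f).add h6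
    simpa using h9
  obtain ⟨ν, hν1, hν2, hν3⟩ := exists_inv_measure_of_functional T L hadd hsmul hone hpos hinv
  have hνμ : ν = μ := huniq ν hν1 hν2
  have hLg : (∫ x, g x ∂μ) + ε ≤ L g := by
    apply ge_of_tendsto (hL g)
    apply Filter.Eventually.of_forall
    intro j
    exact (hωω j).le
  have h10 := hν3 g
  rw [hνμ] at h10
  linarith

end AuxMeasure

/-- `limsup_{n→∞} (1/n) log ‖A(n,ω)‖ ≤ Λ(A)` uniformly on `Ω`. -/
theorem limsup_le_lyapunov_uniformly
    {Ω : Type*} [MetricSpace Ω] [CompactSpace Ω] [MeasurableSpace Ω] [BorelSpace Ω]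
    (T : Ω ≃ₜ Ω) (μ : Measure Ω)
    (hmin : IsMinimalSystem T) (hue : IsUniquelyErgodicWithG T μ)
    (A : Ω → Matrix (Fin 2) (Fin 2) ℝ) (hAcont : Continuous A)
    (hAinv : ∀ ω : Ω, IsUnit (A ω)) :
    ∀ ε > (0 : ℝ), ∃ N : ℕ, ∀ n : ℕ, N ≤ n → ∀ ω : Ω,
      (1 / (n : ℝ)) * Real.log (opNorm (cocPg T A n ω)) ≤ lyapG T μ A + ε := by

  intro ε hε
  have hprob : IsProbabilityMeasure μ := hue.1.1
  have huniq : ∀ ν : Measure Ω, IsProbabilityMeasure ν → ν.map T = ν → ν = μ :=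
    fun ν h1 h2 => hue.2 ν ⟨h1, h2⟩
  -- choose m
  have hΛ : lyapG T μ A < lyapG T μ A + ε/3 := by linarith
  obtain ⟨mp, hmp⟩ := exists_lt_of_ciInf_lt hΛ
  set m : ℕ := (mp : ℕ) with hmdef
  have hm1 : 1 ≤ m := mp.2
  have hmpos : (0:ℝ) < m := by exact_mod_cast mp.2
  -- bounds
  set f1 : Ω →ᵇ ℝ := BoundedContinuousFunction.mkOfCompact
    ⟨lognrm T A 1, continuous_lognrm T A hAcont hAinv 1⟩ with hf1
  set C : ℝ := ‖f1‖ with hCdef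
  have hC0 : 0 ≤ C := norm_nonneg _
  have hC : ∀ ω, lognrm T A 1 ω ≤ C := by
    intro ω
    have := f1.norm_coe_le_norm ω
    rw [hf1] at this
    simp only [BoundedContinuousFunction.mkOfCompact_apply, ContinuousMap.coe_mk] at this
    calc lognrm T A 1 ω ≤ |lognrm T A 1 ω| := le_abs_self _
      _ ≤ C := by rw [hCdef, hf1]; simpa using this
  set fm : Ω →ᵇ ℝ := BoundedContinuousFunction.mkOfCompact
    ⟨lognrm T A m, continuous_lognrm T A hAcont hAinv m⟩ with hfm
  set F : ℝ := ‖fm‖ with hFdef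
  have hF : ∀ ω, |lognrm T A m ω| ≤ F := by
    intro ω
    have := fm.norm_coe_le_norm ω
    rw [hfm] at this
    rw [hFdef, hfm]; simpa using this
  -- birkhoff function
  set g : Ω →ᵇ ℝ := BoundedContinuousFunction.mkOfCompact
    ⟨fun ω => (1/(m:ℝ)) * lognrm T A m ω,
      (continuous_const.mul (continuous_lognrm T A hAcont hAinv m))⟩ with hg
  have hgapp : ∀ x, g x = (1/(m:ℝ)) * lognrm T A m x := fun x => rfl
  have hgint : ∫ x, g x ∂μ = (1/(m:ℝ)) * ∫ ω, lognrm T A m ω ∂μ := by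
    rw [show (fun x => g x) = fun x => (1/(m:ℝ)) * lognrm T A m x from rfl]
    exact MeasureTheory.integral_const_mul _ _
  have hgΛ : ∫ x, g x ∂μ < lyapG T μ A + ε/3 := by
    rw [hgint]
    exact hmp
  obtain ⟨N₁, hN₁⟩ := unif_birkhoff_upper T μ hprob huniq g (show (0:ℝ) < ε/3 by linarith)
  set B : ℝ := 2*F + 2*m*C with hB
  obtain ⟨N₂, hN₂⟩ := exists_nat_gt (3*B/ε)
  refine ⟨max (max N₁ (2*m+1)) N₂, ?_⟩
  intro n hn ω
  have hnN₁ : N₁ ≤ n := le_trans (le_trans (le_max_left _ _) (le_max_left _ _)) hn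
  have hn2m : 2*m ≤ n := le_trans (le_trans (by omega) (le_max_right N₁ (2*m+1))) (le_trans (le_max_left _ _) hn)
  have hnN₂ : N₂ ≤ n := le_trans (le_max_right _ _) hn
  have hn1 : 1 ≤ n := by omega
  have hnpos : (0:ℝ) < n := by exact_mod_cast hn1
  have hkey := stepB T A hAinv hC0 hC m hF n hm1 hn2m ω
  have hbirk := hN₁ n hnN₁ ω
  set S : ℝ := ∑ k ∈ Finset.range n, lognrm T A m ((⇑T)^[k] ω) with hS
  have hgsum : ∑ k ∈ Finset.range n, g ((⇑T)^[k] ω) = (1/(m:ℝ)) * S := by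
    rw [hS, Finset.mul_sum]
    apply Finset.sum_congr rfl
    intro k _
    exact hgapp _
  have h1 : lognrm T A n ω ≤ (1/(m:ℝ)) * S + B := by
    have h2 : (m:ℝ) * (lognrm T A n ω) ≤ (m:ℝ) * ((1/(m:ℝ)) * S + B) := by
      have h3 : (m:ℝ) * ((1/(m:ℝ)) * S + B) = S + 2*m*F + 2*m^2*C := by
        rw [hB]; field_simp; ring
      rw [h3]
      exact hkey
    exact le_of_mul_le_mul_left h2 hmpos
  have h4 : (1/(n:ℝ)) * lognrm T A n ω ≤ (1/(n:ℝ)) * ((1/(m:ℝ)) * S) + (1/(n:ℝ)) * B := by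
    have := mul_le_mul_of_nonneg_left h1 (by positivity : (0:ℝ) ≤ 1/(n:ℝ))
    linarith [this]
  have hF0 : 0 ≤ F := norm_nonneg _
  have h5 : (1/(n:ℝ)) * B ≤ ε/3 := by
    have h5' : 3*B/ε < (n:ℝ) := lt_of_lt_of_le hN₂ (by exact_mod_cast hnN₂)
    have h5'' : 3*B < (n:ℝ)*ε := by
      rw [div_lt_iff₀ hε] at h5'
      linarith
    have h5''' : B/(n:ℝ) ≤ ε/3 := (div_le_div_iff₀ hnpos (by norm_num : (0:ℝ) < 3)).mpr (by linarith)
    calc (1/(n:ℝ)) * B = B/(n:ℝ) := by ring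
      _ ≤ ε/3 := h5'''
  have h6 : (1/(n:ℝ)) * ((1/(m:ℝ)) * S) ≤ (∫ x, g x ∂μ) + ε/3 := by
    rw [← hgsum]
    exact hbirk
  show (1 / (n : ℝ)) * lognrm T A n ω ≤ lyapG T μ A + ε
  linarith
end

section
/- Let (Ω,T) be a strictly ergodic subshift over a finite alphabet A ⊂ ℝ and let E ∈ ℝ. For a word x ∈ W of length n = |x|, the quantity F^E(x) := log‖M^E(n,ω)‖, taken for any ω ∈ Ω with ω(1)⋯ω(n) = x, is well defined (independent of the choice of ω). Moreover, M^E is uniform if and only if the limit lim_{|x|→∞} F^E(x)/|x| over words x ∈ W exists, i.e. there is L ∈ ℝ such that for every ε > 0 there exists N with |F^E(x)/|x| − L| ≤ ε for all x ∈ W with |x| ≥ N. -/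
open MeasureTheory

/-- The `n`-th power of the shift: `(shiftZ n ω) m = ω (m + n)`. -/
def shiftZ (n : ℤ) (ω : ℤ → ℝ) : ℤ → ℝ := fun m => ω (m + n)

/-- The shift `T`. -/
def shift : (ℤ → ℝ) → (ℤ → ℝ) := shiftZ 1

/-- `Ω` is a subshift over the finite alphabet `A ⊂ ℝ`. -/
structure IsSubshift (A : Finset ℝ) (Ω : Set (ℤ → ℝ)) : Prop where
  closed : IsClosed Ω
  vals : ∀ ω ∈ Ω, ∀ n : ℤ, ω n ∈ A
  inv : shift '' Ω = Ω

/-- Minimality: every orbit is dense (in `Ω`). -/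
def IsMinimalSubshift (Ω : Set (ℤ → ℝ)) : Prop :=
  ∀ ω ∈ Ω, ∀ ω' ∈ Ω, ω' ∈ closure {x | ∃ n : ℤ, shiftZ n ω = x}

/-- `μ` is a `T`-invariant Borel probability measure on `Ω`. -/
def IsInvProb (Ω : Set (ℤ → ℝ)) (μ : Measure (ℤ → ℝ)) : Prop :=
  IsProbabilityMeasure μ ∧ μ Ωᶜ = 0 ∧ μ.map shift = μ

/-- `(Ω,T)` is uniquely ergodic with unique invariant probability measure `μ`. -/
def IsUniquelyErgodicWith (Ω : Set (ℤ → ℝ)) (μ : Measure (ℤ → ℝ)) : Prop :=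
  IsInvProb Ω μ ∧ ∀ ν : Measure (ℤ → ℝ), IsInvProb Ω ν → ν = μ

/-- The one-step transfer matrix `M^E(ω)`. -/
noncomputable def transferMat (E : ℝ) (ω : ℤ → ℝ) : Matrix (Fin 2) (Fin 2) ℝ :=
  !![E - ω 1, -1; 1, 0]

/-- `M^E(n, ω)` for `n ≥ 0`. -/
noncomputable def cocP (E : ℝ) : ℕ → (ℤ → ℝ) → Matrix (Fin 2) (Fin 2) ℝ
  | 0, _ => 1
  | (k+1), ω => transferMat E (shiftZ k ω) * cocP E k ω

/-- The transfer matrix cocycle `M^E(n, ω)`, `n ∈ ℤ`. -/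
noncomputable def coc (E : ℝ) (n : ℤ) (ω : ℤ → ℝ) : Matrix (Fin 2) (Fin 2) ℝ :=
  if 0 ≤ n then cocP E n.toNat ω else (cocP E (-n).toNat (shiftZ n ω))⁻¹

/-- The Lyapunov exponent `γ(E) = inf_{n ≥ 1} (1/n) ∫ log ‖M^E(n,ω)‖ dμ(ω)`. -/
noncomputable def lyap (μ : Measure (ℤ → ℝ)) (E : ℝ) : ℝ :=
  ⨅ n : ℕ+, (1 / (n : ℝ)) * ∫ ω, Real.log (opNorm (cocP E (n : ℕ) ω)) ∂μ

/-- `(1/|n|) log ‖M^E(n,ω)‖ → L` as `|n| → ∞`, uniformly in `ω ∈ Ω`. -/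
def IsUniformAt (Ω : Set (ℤ → ℝ)) (E : ℝ) (L : ℝ) : Prop :=
  ∀ ε > (0 : ℝ), ∃ N : ℕ, ∀ n : ℤ, (N : ℤ) ≤ |n| → ∀ ω ∈ Ω,
    |(1 / ((|n| : ℤ) : ℝ)) * Real.log (opNorm (coc E n ω)) - L| ≤ ε

/-- `ℓ²(ℤ)`. -/
noncomputable abbrev ellTwo := lp (fun _ : ℤ => ℝ) 2

/-- `H` is the Schrödinger operator with potential `ω`:
`(H u)(n) = u(n+1) + u(n-1) + ω(n) u(n)`. -/
def IsSchrodingerOp (ω : ℤ → ℝ) (H : ellTwo →L[ℝ] ellTwo) : Prop :=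
  ∀ u : ellTwo, ∀ n : ℤ, H u n = u (n + 1) + u (n - 1) + ω n * u n


/-- `x` is a (finite, nonempty) word of the subshift `Ω`. -/
def IsWordOf (Ω : Set (ℤ → ℝ)) (x : List ℝ) : Prop :=
  x ≠ [] ∧ ∃ ω ∈ Ω, ∃ k : ℤ, ∀ i : ℕ, i < x.length → x.getD i 0 = ω (k + 1 + i)

open scoped Classical in
/-- The number of occurrences of `v` as a subword of `x`. -/
noncomputable def occ (v x : List ℝ) : ℕ :=
  ((Finset.range (x.length + 1 - v.length)).filter
    (fun i => (x.drop i).take v.length = v)).card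

/-- Uniform positivity of weights (PW). -/
def PW (Ω : Set (ℤ → ℝ)) : Prop :=
  ∃ C > (0 : ℝ), ∀ v : List ℝ, IsWordOf Ω v → ∀ ε > (0 : ℝ), ∃ N : ℕ,
    ∀ x : List ℝ, IsWordOf Ω x → N ≤ x.length →
      C - ε ≤ ((occ v x : ℝ) / (x.length : ℝ)) * (v.length : ℝ)



namespace UIWL

section OpNormLemmas
open scoped Matrix.Norms.L2Operator
open Matrix

lemma opNorm_mul_le (A B : Matrix (Fin 2) (Fin 2) ℝ) :
    opNorm (A*B) ≤ opNorm A * opNorm B := norm_mul_le A B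

lemma opNorm_one : opNorm 1 = 1 := by
  show ‖(1 : Matrix (Fin 2) (Fin 2) ℝ)‖ = 1
  rw [Matrix.cstar_norm_def, _root_.map_one]
  exact ContinuousLinearMap.norm_id

lemma opNorm_transpose (M : Matrix (Fin 2) (Fin 2) ℝ) : opNorm Mᵀ = opNorm M := by
  have := Matrix.l2_opNorm_conjTranspose M
  have h : Mᴴ = Mᵀ := by ext i j; simp [Matrix.conjTranspose_apply]
  rw [h] at this; exact this

lemma opNorm_nonneg (M : Matrix (Fin 2) (Fin 2) ℝ) : 0 ≤ opNorm M := norm_nonneg M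

def Wm : Matrix (Fin 2) (Fin 2) ℝ := !![0,1;-1,0]

lemma tp2 (a b c d : ℝ) : (!![a,b;c,d])ᵀ = !![a,c;b,d] := (Matrix.transposeᵣ_eq _).symm

lemma Wm_transpose : Wmᵀ = !![0,-1;1,0] := by
  rw [show Wm = !![(0:ℝ),1;-1,0] from rfl, tp2]

lemma Wm_mul : Wmᵀ * Wm = 1 := by
  rw [Wm_transpose, show Wm = !![(0:ℝ),1;-1,0] from rfl, Matrix.mul_fin_two,
    Matrix.one_fin_two]
  norm_num

lemma opNorm_Wm : opNorm Wm = 1 := by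
  have h : ‖Wmᴴ * Wm‖ = ‖Wm‖ * ‖Wm‖ := CStarRing.norm_star_mul_self
  have hT : Wmᴴ = Wmᵀ := by ext i j; simp [Matrix.conjTranspose_apply]
  rw [hT, Wm_mul] at h
  have h1 : ‖(1 : Matrix (Fin 2) (Fin 2) ℝ)‖ = 1 := opNorm_one
  have := (mul_self_eq_one_iff (a := ‖Wm‖)).mp (by linarith)
  rcases this with h | h
  · exact h
  · nlinarith [norm_nonneg Wm]

lemma adjugate_eq_conj (M : Matrix (Fin 2) (Fin 2) ℝ) : M.adjugate = Wm * Mᵀ * Wmᵀ := by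
  rw [Matrix.adjugate_fin_two, Wm_transpose, show Wm = !![(0:ℝ),1;-1,0] from rfl,
    Matrix.eta_fin_two M, tp2, Matrix.mul_fin_two, Matrix.mul_fin_two]
  norm_num

lemma opNorm_adjugate_le (M : Matrix (Fin 2) (Fin 2) ℝ) : opNorm M.adjugate ≤ opNorm M := by
  rw [adjugate_eq_conj]
  calc opNorm (Wm * Mᵀ * Wmᵀ) ≤ opNorm (Wm * Mᵀ) * opNorm Wmᵀ := opNorm_mul_le _ _
    _ ≤ opNorm Wm * opNorm Mᵀ * opNorm Wmᵀ := by
        have := opNorm_mul_le Wm Mᵀ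
        have h2 := opNorm_nonneg (Wmᵀ)
        nlinarith
    _ = opNorm M := by rw [opNorm_Wm, opNorm_transpose, opNorm_transpose, opNorm_Wm]; ring

lemma opNorm_adjugate (M : Matrix (Fin 2) (Fin 2) ℝ) : opNorm M.adjugate = opNorm M := by
  refine le_antisymm (opNorm_adjugate_le M) ?_
  have h := opNorm_adjugate_le M.adjugate
  have : M.adjugate.adjugate = M := by
    rw [Matrix.adjugate_fin_two, Matrix.adjugate_fin_two]
    ext i j; fin_cases i <;> fin_cases j <;> simp
  rwa [this] at h

lemma opNorm_inv (M : Matrix (Fin 2) (Fin 2) ℝ) (h : M.det = 1) : opNorm M⁻¹ = opNorm M := by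
  rw [Matrix.inv_def, h]
  simp [opNorm_adjugate]

lemma one_le_opNorm (M : Matrix (Fin 2) (Fin 2) ℝ) (h : M.det = 1) : 1 ≤ opNorm M := by
  have hu : IsUnit M.det := by rw [h]; exact isUnit_one
  have h1 : M * M⁻¹ = 1 := Matrix.mul_nonsing_inv M hu
  have h2 : opNorm (M * M⁻¹) ≤ opNorm M * opNorm M⁻¹ := opNorm_mul_le _ _
  rw [h1, opNorm_one, opNorm_inv M h] at h2
  nlinarith [opNorm_nonneg M]

end OpNormLemmas

lemma log_opNorm_nonneg {M : Matrix (Fin 2) (Fin 2) ℝ} (h : M.det = 1) :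
    0 ≤ Real.log (opNorm M) := Real.log_nonneg (one_le_opNorm M h)

lemma log_opNorm_mul_le {A B : Matrix (Fin 2) (Fin 2) ℝ} (hA : A.det = 1) (hB : B.det = 1) :
    Real.log (opNorm (A*B)) ≤ Real.log (opNorm A) + Real.log (opNorm B) := by
  have h1 := one_le_opNorm A hA
  have h2 := one_le_opNorm B hB
  have hAB : (A*B).det = 1 := by rw [Matrix.det_mul, hA, hB, one_mul]
  have h3 := one_le_opNorm _ hAB
  calc Real.log (opNorm (A*B)) ≤ Real.log (opNorm A * opNorm B) :=
        Real.log_le_log (by linarith) (opNorm_mul_le A B)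
    _ = Real.log (opNorm A) + Real.log (opNorm B) :=
        Real.log_mul (by linarith) (by linarith)

lemma shiftZ_shiftZ (a b : ℤ) (ω : ℤ → ℝ) : shiftZ a (shiftZ b ω) = shiftZ (a + b) ω := by
  funext m; simp [shiftZ, add_assoc]

lemma shiftZ_zero (ω : ℤ → ℝ) : shiftZ 0 ω = ω := by funext m; simp [shiftZ]

lemma measurable_shiftZ (n : ℤ) : Measurable (shiftZ n) :=
  measurable_pi_lambda _ fun _ => measurable_pi_apply _

lemma det_transferMat (E : ℝ) (ω : ℤ → ℝ) : (transferMat E ω).det = 1 := by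
  simp [transferMat, Matrix.det_fin_two_of]

lemma det_cocP (E : ℝ) (n : ℕ) (ω : ℤ → ℝ) : (cocP E n ω).det = 1 := by
  induction n with
  | zero => simp [cocP]
  | succ k ih => simp [cocP, Matrix.det_mul, ih, det_transferMat]

lemma cocP_congr (E : ℝ) (n : ℕ) (ω ω' : ℤ → ℝ)
    (h : ∀ i : ℕ, i < n → ω (1 + i) = ω' (1 + i)) : cocP E n ω = cocP E n ω' := by
  induction n with
  | zero => rfl
  | succ k ih =>
    have h1 : (shiftZ k ω) 1 = (shiftZ k ω') 1 := by
      simpa [shiftZ, add_comm] using h k (Nat.lt_succ_self k)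
    show transferMat E (shiftZ k ω) * cocP E k ω = transferMat E (shiftZ k ω') * cocP E k ω'
    rw [ih (fun i hi => h i (Nat.lt_succ_of_lt hi))]
    congr 1
    simp [transferMat, h1]

lemma cocP_add (E : ℝ) (p q : ℕ) (ω : ℤ → ℝ) :
    cocP E (p + q) ω = cocP E q (shiftZ p ω) * cocP E p ω := by
  induction q with
  | zero => simp [cocP]
  | succ k ih =>
    show cocP E ((p + k) + 1) ω
      = transferMat E (shiftZ k (shiftZ p ω)) * cocP E k (shiftZ p ω) * cocP E p ω
    show transferMat E (shiftZ (p + k : ℕ) ω) * cocP E (p + k) ω = _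
    rw [ih, shiftZ_shiftZ]
    have : ((p + k : ℕ) : ℤ) = (k : ℤ) + p := by push_cast; ring
    rw [this, mul_assoc]

lemma continuous_opNorm : Continuous opNorm := by
  have : Continuous fun M : Matrix (Fin 2) (Fin 2) ℝ =>
      ((Matrix.toEuclideanLin (𝕜 := ℝ) (m := Fin 2) (n := Fin 2)).trans
        LinearMap.toContinuousLinearMap).toLinearMap M :=
    LinearMap.continuous_of_finiteDimensional _
  exact continuous_norm.comp this

lemma continuous_cocP (E : ℝ) (n : ℕ) : Continuous (cocP E n) := by
  induction n with
  | zero => exact continuous_const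
  | succ k ih =>
    show Continuous fun ω => transferMat E (shiftZ k ω) * cocP E k ω
    refine Continuous.matrix_mul ?_ ih
    have hc : Continuous fun ω : ℤ → ℝ => ω (1 + k) := continuous_apply _
    refine continuous_matrix fun i j => ?_
    fin_cases i <;> fin_cases j <;>
      simp only [transferMat, shiftZ, Matrix.cons_val_zero, Matrix.cons_val_one,
        Matrix.head_cons, Matrix.head_fin_const, Matrix.cons_val', Matrix.empty_val',
        Matrix.cons_val_fin_one, Matrix.of_apply] <;>
      [exact (continuous_const.sub (by simpa [add_comm] using hc)); exact continuous_const;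
       exact continuous_const; exact continuous_const]

lemma measurable_logcocP (E : ℝ) (n : ℕ) :
    Measurable (fun ω => Real.log (opNorm (cocP E n ω))) :=
  Real.measurable_log.comp ((continuous_opNorm.comp (continuous_cocP E n)).measurable)

lemma mem_shiftZ {Ω : Set (ℤ → ℝ)} (hinv : shift '' Ω = Ω) (n : ℤ) {ω : ℤ → ℝ}
    (hω : ω ∈ Ω) : shiftZ n ω ∈ Ω := by
  induction n using Int.induction_on with
  | zero => rwa [shiftZ_zero]
  | succ k ih =>
    have : shiftZ (k + 1 : ℤ) ω = shift (shiftZ k ω) := by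
      rw [shift, shiftZ_shiftZ]; norm_num [add_comm]
    rw [this, ← hinv]
    exact Set.mem_image_of_mem _ ih
  | pred k ih =>
    rw [← hinv] at ih
    obtain ⟨ω', hω', hs⟩ := ih
    have h2 : ω' = shiftZ (-(k:ℤ) - 1) ω := by
      have h := congrArg (shiftZ (-1)) hs
      rw [shift, shiftZ_shiftZ, shiftZ_shiftZ] at h
      norm_num at h
      rw [show (-1 + -(k:ℤ)) = -(k:ℤ) - 1 by ring] at h
      rwa [shiftZ_zero] at h
    rwa [← h2]

lemma map_shiftZ_nat {μ : Measure (ℤ → ℝ)} (hm : μ.map shift = μ) (p : ℕ) :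
    μ.map (shiftZ p) = μ := by
  induction p with
  | zero =>
    rw [show ((0:ℕ):ℤ) = 0 from rfl, show shiftZ (0:ℤ) = id from funext shiftZ_zero]
    exact Measure.map_id
  | succ k ih =>
    have hc : shiftZ ((k+1 : ℕ) : ℤ) = shift ∘ shiftZ k := by
      funext ω; rw [Function.comp_apply, shift, shiftZ_shiftZ]; norm_num [add_comm]
    rw [hc, ← Measure.map_map (by exact measurable_shiftZ 1) (measurable_shiftZ k), ih, hm]

lemma integral_shiftZ {μ : Measure (ℤ → ℝ)} (hm : μ.map shift = μ) (p : ℕ)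
    {f : (ℤ → ℝ) → ℝ} (hf : Measurable f) :
    ∫ ω, f (shiftZ p ω) ∂μ = ∫ ω, f ω ∂μ := by
  conv_rhs => rw [← map_shiftZ_nat hm p]
  rw [integral_map (measurable_shiftZ _).aemeasurable hf.aestronglyMeasurable]

lemma exists_bound (A : Finset ℝ) {Ω : Set (ℤ → ℝ)} (hsub : IsSubshift A Ω) (E : ℝ)
    (hA : A.Nonempty) :
    ∃ B : ℝ, ∀ n : ℕ, ∀ ω ∈ Ω, Real.log (opNorm (cocP E n ω)) ≤ n * B := by
  refine ⟨A.sup' hA (fun a => Real.log (opNorm !![E - a, -1; 1, 0])), ?_⟩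
  intro n
  induction n with
  | zero =>
    intro ω _
    simp [cocP, opNorm_one]
  | succ k ih =>
    intro ω hω
    have hm : Real.log (opNorm (cocP E (k+1) ω))
        ≤ Real.log (opNorm (transferMat E (shiftZ k ω))) + Real.log (opNorm (cocP E k ω)) :=
      log_opNorm_mul_le (det_transferMat E _) (det_cocP E k ω)
    have hT : Real.log (opNorm (transferMat E (shiftZ k ω)))
        ≤ A.sup' hA (fun a => Real.log (opNorm !![E - a, -1; 1, 0])) := by
      have hval : (shiftZ k ω) 1 ∈ A := hsub.vals _ (mem_shiftZ hsub.inv k hω) 1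
      have := Finset.le_sup' (fun a => Real.log (opNorm !![E - a, -1; 1, 0])) hval
      simpa only [transferMat] using this
    have := ih ω hω
    push_cast
    linarith

lemma ofFn_getD (σ : ℤ → ℝ) (m : ℕ) (i : ℕ) (hi : i < m) :
    (List.ofFn fun j : Fin m => σ (1 + j)).getD i 0 = σ (1 + i) := by
  rw [List.getD_eq_getElem _ _ (by simpa using hi)]
  simp

end UIWL

/-- `F^E(x) = log ‖M^E(|x|, ω)‖` (for any `ω ∈ Ω` beginning with `x` at
positions `1, …, |x|`) is well defined, and `M^E` is uniform if and only if the limit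
`lim_{|x| → ∞} F^E(x)/|x|` over words exists. -/
theorem uniform_iff_word_limit
    (A : Finset ℝ) (Ω : Set (ℤ → ℝ)) (μ : Measure (ℤ → ℝ))
    (hsub : IsSubshift A Ω) (hmin : IsMinimalSubshift Ω)
    (hue : IsUniquelyErgodicWith Ω μ) (E : ℝ) :
    (∀ x : List ℝ, IsWordOf Ω x → ∀ ω ∈ Ω, ∀ ω' ∈ Ω,
      (∀ i : ℕ, i < x.length → x.getD i 0 = ω (1 + i)) →
      (∀ i : ℕ, i < x.length → x.getD i 0 = ω' (1 + i)) →
      Real.log (opNorm (cocP E x.length ω)) = Real.log (opNorm (cocP E x.length ω'))) ∧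
    (IsUniformAt Ω E (lyap μ E) ↔
      ∃ L : ℝ, ∀ ε > (0 : ℝ), ∃ N : ℕ, ∀ x : List ℝ, IsWordOf Ω x → N ≤ x.length →
        ∀ ω ∈ Ω, (∀ i : ℕ, i < x.length → x.getD i 0 = ω (1 + i)) →
          |Real.log (opNorm (cocP E x.length ω)) / (x.length : ℝ) - L| ≤ ε) := by
  obtain ⟨⟨hprob, hΩc, hmap⟩, -⟩ := hue
  haveI := hprob
  have haem : ∀ᵐ ω ∂μ, ω ∈ Ω := by
    rw [MeasureTheory.ae_iff]
    exact hΩc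
  have hΩne : Ω.Nonempty := by
    rcases Set.eq_empty_or_nonempty Ω with h | h
    · exfalso
      rw [h, Set.compl_empty, measure_univ] at hΩc
      exact one_ne_zero hΩc
    · exact h
  obtain ⟨ω₀, hω₀⟩ := hΩne
  have hAne : A.Nonempty := ⟨ω₀ 0, hsub.vals ω₀ hω₀ 0⟩
  obtain ⟨B, hB⟩ := UIWL.exists_bound A hsub E hAne
  have hInt : ∀ n : ℕ, Integrable (fun ω => Real.log (opNorm (cocP E n ω))) μ := by
    intro n
    refine Integrable.mono' (integrable_const ((n:ℝ) * B))
      ((UIWL.measurable_logcocP E n).aestronglyMeasurable) ?_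
    filter_upwards [haem] with ω hω
    rw [Real.norm_eq_abs, abs_of_nonneg (UIWL.log_opNorm_nonneg (UIWL.det_cocP E n ω))]
    exact hB n ω hω
  refine ⟨?_, ?_, ?_⟩
  · intro x hx ω hω ω' hω' h1 h2
    rw [UIWL.cocP_congr E x.length ω ω' (fun i hi => by rw [← h1 i hi, h2 i hi])]
  · -- forward direction
    intro hU
    refine ⟨lyap μ E, fun ε hε => ?_⟩
    obtain ⟨N₀, hN₀⟩ := hU ε hε
    refine ⟨max N₀ 1, fun x hx hlen ω hω _ => ?_⟩
    have hm1 : 1 ≤ x.length := le_trans (le_max_right _ _) hlen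
    have hm0 : (0:ℤ) ≤ (x.length : ℤ) := by positivity
    have habs : |(x.length : ℤ)| = (x.length : ℤ) := abs_of_nonneg hm0
    have h := hN₀ (x.length : ℤ)
      (by rw [habs]; exact_mod_cast le_trans (le_max_left _ _) hlen) ω hω
    have hcoc : coc E (x.length : ℤ) ω = cocP E x.length ω := by
      rw [coc, if_pos hm0, Int.toNat_natCast]
    rw [hcoc, habs] at h
    have heq : Real.log (opNorm (cocP E x.length ω)) / (x.length:ℝ)
        = (1 / (((x.length:ℤ)):ℝ)) * Real.log (opNorm (cocP E x.length ω)) := by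
      push_cast; ring
    rw [heq]
    exact h
  · -- backward direction
    rintro ⟨L, hL⟩
    have hword : ∀ ε > (0:ℝ), ∃ N₁ : ℕ, 1 ≤ N₁ ∧ ∀ m : ℕ, N₁ ≤ m → ∀ σ ∈ Ω,
        |Real.log (opNorm (cocP E m σ)) / (m:ℝ) - L| ≤ ε := by
      intro ε hε
      obtain ⟨N₁, hN₁⟩ := hL ε hε
      refine ⟨max N₁ 1, le_max_right _ _, fun m hm σ hσ => ?_⟩
      have hm1 : 1 ≤ m := le_trans (le_max_right _ _) hm
      set x : List ℝ := List.ofFn fun j : Fin m => σ (1 + j) with hxdef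
      have hxlen : x.length = m := by simp [hxdef]
      have hgetD : ∀ i : ℕ, i < x.length → x.getD i 0 = σ (1 + i) := by
        intro i hi
        rw [hxlen] at hi
        exact UIWL.ofFn_getD σ m i hi
      have hxw : IsWordOf Ω x := by
        refine ⟨?_, σ, hσ, 0, fun i hi => ?_⟩
        · intro hnil
          rw [hnil] at hxlen
          simp at hxlen
          omega
        · rw [hgetD i hi]; norm_num
      have h := hN₁ x hxw (by rw [hxlen]; exact le_trans (le_max_left _ _) hm) σ hσ hgetD
      rwa [hxlen] at h
    have haint : ∀ ε > (0:ℝ), ∃ N₁ : ℕ, 1 ≤ N₁ ∧ ∀ m : ℕ, N₁ ≤ m →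
        |(∫ ω, Real.log (opNorm (cocP E m ω)) ∂μ) / (m:ℝ) - L| ≤ ε := by
      intro ε hε
      obtain ⟨N₁, h1, hN₁⟩ := hword ε hε
      refine ⟨N₁, h1, fun m hm => ?_⟩
      have hm0 : (0:ℝ) < (m:ℝ) := by exact_mod_cast lt_of_lt_of_le h1 hm
      have hbd : ‖∫ ω, (Real.log (opNorm (cocP E m ω)) - (m:ℝ)*L) ∂μ‖
          ≤ ((m:ℝ)*ε) * (μ Set.univ).toReal := by
        refine norm_integral_le_of_norm_le_const ?_
        filter_upwards [haem] with ω hω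
        rw [Real.norm_eq_abs]
        have h := hN₁ m hm ω hω
        have heq2 : Real.log (opNorm (cocP E m ω)) - (m:ℝ)*L
            = (m:ℝ) * (Real.log (opNorm (cocP E m ω))/(m:ℝ) - L) := by field_simp
        rw [heq2, abs_mul, abs_of_pos hm0]
        exact mul_le_mul_of_nonneg_left h (le_of_lt hm0)
      rw [integral_sub (hInt m) (integrable_const _), integral_const, measure_univ] at hbd
      simp only [ENNReal.toReal_one, probReal_univ, one_smul, smul_eq_mul, mul_one, one_mul] at hbd
      rw [Real.norm_eq_abs] at hbd
      have heq : (∫ ω, Real.log (opNorm (cocP E m ω)) ∂μ) / (m:ℝ) - L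
          = ((∫ ω, Real.log (opNorm (cocP E m ω)) ∂μ) - (m:ℝ)*L)/(m:ℝ) := by
        field_simp
      rw [heq, abs_div, abs_of_pos hm0, div_le_iff₀ hm0]
      linarith
    have hsubadd : ∀ p q : ℕ, (∫ ω, Real.log (opNorm (cocP E (p+q) ω)) ∂μ)
        ≤ (∫ ω, Real.log (opNorm (cocP E p ω)) ∂μ)
          + (∫ ω, Real.log (opNorm (cocP E q ω)) ∂μ) := by
      intro p q
      have hcomp : Integrable (fun ω => Real.log (opNorm (cocP E q (shiftZ p ω)))) μ := by
        have := (integrable_map_measure ((UIWL.measurable_logcocP E q).aestronglyMeasurable)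
          (UIWL.measurable_shiftZ p).aemeasurable).mp
          (by rw [UIWL.map_shiftZ_nat hmap p]; exact hInt q)
        exact this
      have hpt : ∀ ω, Real.log (opNorm (cocP E (p+q) ω))
          ≤ Real.log (opNorm (cocP E q (shiftZ p ω))) + Real.log (opNorm (cocP E p ω)) := by
        intro ω
        rw [UIWL.cocP_add E p q ω]
        exact UIWL.log_opNorm_mul_le (UIWL.det_cocP E q _) (UIWL.det_cocP E p ω)
      calc (∫ ω, Real.log (opNorm (cocP E (p+q) ω)) ∂μ)
          ≤ ∫ ω, (Real.log (opNorm (cocP E q (shiftZ p ω)))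
              + Real.log (opNorm (cocP E p ω))) ∂μ :=
            integral_mono (hInt _) (hcomp.add (hInt p)) hpt
        _ = (∫ ω, Real.log (opNorm (cocP E q (shiftZ p ω))) ∂μ)
              + (∫ ω, Real.log (opNorm (cocP E p ω)) ∂μ) := integral_add hcomp (hInt p)
        _ = _ := by
            rw [UIWL.integral_shiftZ hmap p (UIWL.measurable_logcocP E q)]
            ring
    have hmul : ∀ m k : ℕ, (∫ ω, Real.log (opNorm (cocP E (k*m) ω)) ∂μ)
        ≤ (k:ℝ) * (∫ ω, Real.log (opNorm (cocP E m ω)) ∂μ) := by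
      intro m k
      induction k with
      | zero => simp [cocP, UIWL.opNorm_one]
      | succ j ih =>
        have h1 : (j+1)*m = j*m + m := by ring
        rw [h1]
        have := hsubadd (j*m) m
        push_cast
        linarith
    have hann : ∀ n : ℕ, 0 ≤ (∫ ω, Real.log (opNorm (cocP E n ω)) ∂μ) := fun n =>
      integral_nonneg fun ω => UIWL.log_opNorm_nonneg (UIWL.det_cocP E n ω)
    have hla : ∀ m : ℕ, 1 ≤ m → L ≤ (∫ ω, Real.log (opNorm (cocP E m ω)) ∂μ) / (m:ℝ) := by
      intro m hm
      apply le_of_forall_pos_le_add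
      intro ε hε
      obtain ⟨N₁, h1, hN₁⟩ := haint ε hε
      have hNm : N₁ ≤ N₁ * m := Nat.le_mul_of_pos_right N₁ (by omega)
      have h2 := hN₁ (N₁*m) hNm
      have hm0 : (0:ℝ) < (m:ℝ) := by exact_mod_cast hm
      have hN0 : (0:ℝ) < (N₁:ℝ) := by exact_mod_cast h1
      have h3 := hmul m N₁
      have h4 : (∫ ω, Real.log (opNorm (cocP E (N₁*m) ω)) ∂μ) / ((N₁*m : ℕ):ℝ)
          ≤ (∫ ω, Real.log (opNorm (cocP E m ω)) ∂μ) / (m:ℝ) := by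
        rw [div_le_div_iff₀ (by positivity) hm0]
        push_cast
        nlinarith [hann (N₁*m)]
      have h5 : L - ε ≤ (∫ ω, Real.log (opNorm (cocP E (N₁*m) ω)) ∂μ) / ((N₁*m : ℕ):ℝ) := by
        have := (abs_le.mp h2).1
        linarith
      linarith
    have hlyap : lyap μ E = L := by
      have hbdd : BddBelow (Set.range fun n : ℕ+ =>
          (1 / ((n:ℕ):ℝ)) * ∫ ω, Real.log (opNorm (cocP E (n:ℕ) ω)) ∂μ) := by
        refine ⟨0, ?_⟩
        rintro y ⟨n, rfl⟩
        have := hann (n:ℕ)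
        positivity
      apply le_antisymm
      · apply le_of_forall_pos_le_add
        intro ε hε
        obtain ⟨N₁, h1, hN₁⟩ := haint ε hε
        have h2 := hN₁ N₁ le_rfl
        have hN0 : (0:ℝ) < (N₁:ℝ) := by exact_mod_cast h1
        have hle := ciInf_le hbdd (⟨N₁, h1⟩ : ℕ+)
        have h3 : (1 / ((N₁:ℕ):ℝ)) * ∫ ω, Real.log (opNorm (cocP E N₁ ω)) ∂μ
            = (∫ ω, Real.log (opNorm (cocP E N₁ ω)) ∂μ) / (N₁:ℝ) := by
          push_cast; ring
        have h4 := (abs_le.mp h2).2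
        calc lyap μ E ≤ (1 / ((N₁:ℕ):ℝ)) * ∫ ω, Real.log (opNorm (cocP E N₁ ω)) ∂μ := hle
          _ = (∫ ω, Real.log (opNorm (cocP E N₁ ω)) ∂μ) / (N₁:ℝ) := h3
          _ ≤ L + ε := by linarith
      · apply le_ciInf
        intro n
        have := hla (n:ℕ) n.2
        have hn0 : (0:ℝ) < ((n:ℕ):ℝ) := by exact_mod_cast n.2
        calc L ≤ (∫ ω, Real.log (opNorm (cocP E (n:ℕ) ω)) ∂μ) / ((n:ℕ):ℝ) := this
          _ = (1 / ((n:ℕ):ℝ)) * ∫ ω, Real.log (opNorm (cocP E (n:ℕ) ω)) ∂μ := by ring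
    rw [hlyap]
    intro ε hε
    obtain ⟨N₁, h1, hN₁⟩ := hword ε hε
    refine ⟨N₁, fun n hn ω hω => ?_⟩
    rcases le_or_gt 0 n with hn0 | hn0
    · have habs : |n| = n := abs_of_nonneg hn0
      set m := n.toNat with hmdef
      have hmn : (m:ℤ) = n := Int.toNat_of_nonneg hn0
      have hmN : N₁ ≤ m := by omega
      have hcoc : coc E n ω = cocP E m ω := by rw [coc, if_pos hn0]
      have h := hN₁ m hmN ω hω
      rw [hcoc, habs, ← hmn]
      have heq : (1 / (((m:ℤ)):ℝ)) * Real.log (opNorm (cocP E m ω))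
          = Real.log (opNorm (cocP E m ω)) / (m:ℝ) := by push_cast; ring
      rw [heq]
      exact h
    · have habs : |n| = -n := abs_of_neg hn0
      set m := (-n).toNat with hmdef
      have hmn : (m:ℤ) = -n := Int.toNat_of_nonneg (by omega)
      have hmN : N₁ ≤ m := by omega
      have hσ : shiftZ n ω ∈ Ω := UIWL.mem_shiftZ hsub.inv n hω
      have hcoc : coc E n ω = (cocP E m (shiftZ n ω))⁻¹ := by
        rw [coc, if_neg (by omega)]
      have hninv : opNorm (cocP E m (shiftZ n ω))⁻¹ = opNorm (cocP E m (shiftZ n ω)) :=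
        UIWL.opNorm_inv _ (UIWL.det_cocP E m _)
      have h := hN₁ m hmN (shiftZ n ω) hσ
      rw [hcoc, hninv, habs, ← hmn]
      have heq : (1 / (((m:ℤ)):ℝ)) * Real.log (opNorm (cocP E m (shiftZ n ω)))
          = Real.log (opNorm (cocP E m (shiftZ n ω))) / (m:ℝ) := by push_cast; ring
      rw [heq]
      exact h
end

section
/- Let (Ω,T) be a strictly ergodic subshift over a finite alphabet A ⊂ ℝ and let E ∈ ℝ be such that M^E is uniform and γ(E) > 0. Then for every ω ∈ Ω, every polynomially bounded solution of the difference equation u(n+1) + u(n−1) + (ω(n) − E)u(n) = 0 (n ∈ ℤ) is identically zero; here u : ℤ → ℝ is polynomially bounded if there exist C > 0 and k ∈ ℕ with |u(n)| ≤ C(1+|n|)^k for all n ∈ ℤ. -/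
open MeasureTheory

section NPBSHelpers

/-! ### Euclidean norm on `ℝ²` as a concrete function -/

noncomputable def en (v : Fin 2 → ℝ) : ℝ := Real.sqrt (v 0 ^ 2 + v 1 ^ 2)

lemma en_nonneg (v : Fin 2 → ℝ) : 0 ≤ en v := Real.sqrt_nonneg _

lemma en_sq (v : Fin 2 → ℝ) : en v ^ 2 = v 0 ^ 2 + v 1 ^ 2 := Real.sq_sqrt (by positivity)

lemma en_smul (c : ℝ) (v : Fin 2 → ℝ) : en (c • v) = |c| * en v := by
  simp only [en, Pi.smul_apply, smul_eq_mul]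
  rw [show (c * v 0) ^ 2 + (c * v 1) ^ 2 = c ^ 2 * (v 0 ^ 2 + v 1 ^ 2) by ring,
    Real.sqrt_mul (by positivity), Real.sqrt_sq_eq_abs]

lemma en_inner_le (v w : Fin 2 → ℝ) : v 0 * w 0 + v 1 * w 1 ≤ en v * en w := by
  have h1 := en_sq v; have h2 := en_sq w
  have h3 := en_nonneg v; have h4 := en_nonneg w
  nlinarith [sq_nonneg (v 0 * w 1 - v 1 * w 0),
    sq_nonneg (en v * en w - (v 0 * w 0 + v 1 * w 1)), mul_nonneg h3 h4]

lemma en_neg (v : Fin 2 → ℝ) : en (-v) = en v := by simp [en, neg_sq]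

lemma en_inner_abs_le (v w : Fin 2 → ℝ) : |v 0 * w 0 + v 1 * w 1| ≤ en v * en w := by
  rcases abs_cases (v 0 * w 0 + v 1 * w 1) with ⟨h, _⟩ | ⟨h, _⟩
  · rw [h]; exact en_inner_le v w
  · rw [h]
    have h5 := en_inner_le (-v) w
    rw [en_neg] at h5
    simp only [Pi.neg_apply] at h5
    linarith

lemma en_add_le (v w : Fin 2 → ℝ) : en (v + w) ≤ en v + en w := by
  have h := en_inner_le v w
  have h1 := en_sq v; have h2 := en_sq w
  have h3 := en_nonneg v; have h4 := en_nonneg w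
  have : en (v + w) ^ 2 ≤ (en v + en w) ^ 2 := by
    rw [en_sq]; simp only [Pi.add_apply]; nlinarith
  nlinarith [en_nonneg (v + w)]

lemma en_eq_zero {v : Fin 2 → ℝ} (h : en v = 0) : v 0 = 0 ∧ v 1 = 0 := by
  have := en_sq v
  rw [h] at this
  constructor <;> nlinarith [sq_nonneg (v 0), sq_nonneg (v 1)]

lemma en_le_abs (v : Fin 2 → ℝ) : en v ≤ |v 0| + |v 1| := by
  rw [show en v = Real.sqrt (v 0 ^ 2 + v 1 ^ 2) from rfl]
  rw [show |v 0| + |v 1| = Real.sqrt ((|v 0| + |v 1|) ^ 2) from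
    (Real.sqrt_sq (by positivity)).symm]
  apply Real.sqrt_le_sqrt
  nlinarith [sq_abs (v 0), sq_abs (v 1), mul_nonneg (abs_nonneg (v 0)) (abs_nonneg (v 1))]

/-! ### `opNorm` bridging lemmas -/

lemma en_eq_norm (v : Fin 2 → ℝ) :
    ‖(WithLp.equiv 2 (Fin 2 → ℝ)).symm v‖ = en v := by
  rw [EuclideanSpace.norm_eq]
  simp [en, Fin.sum_univ_two, sq_abs]

lemma en_mulVec_le (M : Matrix (Fin 2) (Fin 2) ℝ) (v : Fin 2 → ℝ) :
    en (M.mulVec v) ≤ opNorm M * en v := by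
  have h := (LinearMap.toContinuousLinearMap (Matrix.toEuclideanLin M)).le_opNorm
    ((WithLp.equiv 2 (Fin 2 → ℝ)).symm v)
  rw [← en_eq_norm, ← en_eq_norm]
  simpa [opNorm, Matrix.toEuclideanLin_apply_piLp_toLp] using h

lemma opNorm_nonneg (M : Matrix (Fin 2) (Fin 2) ℝ) : 0 ≤ opNorm M := norm_nonneg _

lemma opNorm_le_of (M : Matrix (Fin 2) (Fin 2) ℝ) (K : ℝ) (hK : 0 ≤ K)
    (h : ∀ v, en (M.mulVec v) ≤ K * en v) : opNorm M ≤ K := by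
  apply ContinuousLinearMap.opNorm_le_bound _ hK
  intro x
  have h1 : (LinearMap.toContinuousLinearMap (Matrix.toEuclideanLin M)) x
      = (WithLp.equiv 2 (Fin 2 → ℝ)).symm (M.mulVec ((WithLp.equiv 2 (Fin 2 → ℝ)) x)) := rfl
  have h2 : ‖x‖ = en ((WithLp.equiv 2 (Fin 2 → ℝ)) x) := by
    rw [← en_eq_norm, Equiv.symm_apply_apply]
  rw [h1, en_eq_norm, h2]
  exact h _

/-! ### Shift and cocycle lemmas -/

lemma shiftZ_shiftZ (a b : ℤ) (ω : ℤ → ℝ) : shiftZ a (shiftZ b ω) = shiftZ (a + b) ω := by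
  funext m; simp only [shiftZ]; ring_nf

lemma shiftZ_zero (ω : ℤ → ℝ) : shiftZ 0 ω = ω := by funext m; simp [shiftZ]

lemma shiftZ_mem {Ω : Set (ℤ → ℝ)} (hinv : shift '' Ω = Ω) :
    ∀ (m : ℤ) (ω : ℤ → ℝ), ω ∈ Ω → shiftZ m ω ∈ Ω := by
  intro m
  induction m using Int.induction_on with
  | zero => intro ω hω; rwa [shiftZ_zero]
  | succ i ih =>
      intro ω hω
      have h1 : shiftZ (i + 1) ω = shift (shiftZ i ω) := by
        rw [shift, shiftZ_shiftZ]; ring_nf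
      rw [h1, ← hinv]
      exact Set.mem_image_of_mem _ (ih ω hω)
  | pred i ih =>
      intro ω hω
      have h0 : shiftZ (-i) ω ∈ Ω := ih ω hω
      rw [← hinv] at h0
      obtain ⟨ω₀, hω₀, heq⟩ := h0
      have heq2 : shiftZ (-(i + 1)) ω = ω₀ := by
        rw [show (-(i + 1) : ℤ) = -1 + -i by ring, ← shiftZ_shiftZ, ← heq, shift,
          shiftZ_shiftZ]
        norm_num [shiftZ_zero]
      rw [show (-(i : ℤ) - 1) = -(i + 1) by ring, heq2]
      exact hω₀

lemma cocP_det (E : ℝ) (ω : ℤ → ℝ) : ∀ m : ℕ, (cocP E m ω).det = 1 := by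
  intro m
  induction m with
  | zero => simp [cocP]
  | succ k ih =>
      rw [cocP, Matrix.det_mul, ih, transferMat, Matrix.det_fin_two_of]
      ring

lemma cocP_add (E : ℝ) (ω : ℤ → ℝ) (m : ℕ) :
    ∀ k : ℕ, cocP E (m + k) ω = cocP E k (shiftZ m ω) * cocP E m ω := by
  intro k
  induction k with
  | zero => simp [cocP, Matrix.one_mul]
  | succ j ih =>
      have h1 : shiftZ (j : ℤ) (shiftZ (m : ℤ) ω) = shiftZ ((m + j : ℕ) : ℤ) ω := by
        rw [shiftZ_shiftZ]; push_cast; ring_nf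
      rw [show m + (j + 1) = (m + j) + 1 from rfl, cocP, cocP, ih, h1, Matrix.mul_assoc]

lemma transfer_step (E : ℝ) (ω u : ℤ → ℝ)
    (hu : ∀ n : ℤ, u (n + 1) + u (n - 1) + (ω n - E) * u n = 0) (n : ℤ) :
    (transferMat E (shiftZ n ω)).mulVec ![u (n + 1), u n] = ![u (n + 2), u (n + 1)] := by
  have h := hu (n + 1)
  rw [show n + 1 - 1 = n by ring, show n + 1 + 1 = n + 2 by ring] at h
  funext i
  fin_cases i <;>
    simp [transferMat, Matrix.mulVec, dotProduct, Fin.sum_univ_two, shiftZ] <;>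
    · rw [show (1 : ℤ) + n = n + 1 by ring]; linarith

lemma cocP_mulVec_sol (E : ℝ) (ω u : ℤ → ℝ)
    (hu : ∀ n : ℤ, u (n + 1) + u (n - 1) + (ω n - E) * u n = 0) :
    ∀ m : ℕ, (cocP E m ω).mulVec ![u 1, u 0] = ![u ((m : ℤ) + 1), u (m : ℤ)] := by
  intro m
  induction m with
  | zero => norm_num [cocP, Matrix.one_mulVec]
  | succ k ih =>
      rw [cocP, ← Matrix.mulVec_mulVec, ih, transfer_step E ω u hu (k : ℤ)]
      congr 1 <;> push_cast <;> ring_nf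

lemma sol_zero (E : ℝ) (ω u : ℤ → ℝ)
    (hu : ∀ n : ℤ, u (n + 1) + u (n - 1) + (ω n - E) * u n = 0)
    (h0 : u 0 = 0) (h1 : u 1 = 0) : ∀ n : ℤ, u n = 0 := by
  have key : ∀ n : ℤ, u n = 0 ∧ u (n + 1) = 0 := by
    intro n
    induction n using Int.induction_on with
    | zero => exact ⟨h0, h1⟩
    | succ i ih =>
        refine ⟨ih.2, ?_⟩
        have h := hu (i + 1)
        rw [show (i : ℤ) + 1 - 1 = i by ring] at h
        have h2 : u ((i : ℤ) + 1 + 1) = 0 := by rw [ih.1, ih.2] at h; linarith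
        rwa [show (i : ℤ) + 1 + 1 = i + 1 + 1 by ring] at h2
    | pred i ih =>
        have h := hu (-i)
        refine ⟨?_, ?_⟩
        · rw [ih.1, ih.2] at h; linarith
        · rw [show (-(i : ℤ) - 1 + 1) = -i by ring]; exact ih.1

  exact fun n => (key n).1

/-! ### The key geometric bound -/

set_option maxHeartbeats 1000000 in
lemma key_bound (A B : Matrix (Fin 2) (Fin 2) ℝ) (x y z : Fin 2 → ℝ) (NA NB : ℝ)
    (hdet : A 0 0 * A 1 1 - A 0 1 * A 1 0 = 1)
    (hAx : A.mulVec x = y) (hBy : B.mulVec y = z)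
    (hA : ∀ v, en (A.mulVec v) ≤ NA * en v) (hB : ∀ v, en (B.mulVec v) ≤ NB * en v)
    (w : Fin 2 → ℝ) :
    en x ^ 2 * en y ^ 2 * en ((B * A).mulVec w) ≤
      (en z * en y ^ 2 * en x + NA * en x ^ 2 * en y * en z + NB * en x ^ 3 * en y) * en w := by
  set xp : Fin 2 → ℝ := ![-(x 1), x 0] with hxp
  set yp : Fin 2 → ℝ := ![-(y 1), y 0] with hyp
  set v : Fin 2 → ℝ := A.mulVec xp with hv
  have hxp0 : xp 0 = -(x 1) := rfl
  have hxp1 : xp 1 = x 0 := rfl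
  have hyp0 : yp 0 = -(y 1) := rfl
  have hyp1 : yp 1 = y 0 := rfl
  have en_xp : en xp = en x := by
    simp only [en, hxp0, hxp1]
    rw [show (-(x 1)) ^ 2 + x 0 ^ 2 = x 0 ^ 2 + x 1 ^ 2 by ring]
  have en_yp : en yp = en y := by
    simp only [en, hyp0, hyp1]
    rw [show (-(y 1)) ^ 2 + y 0 ^ 2 = y 0 ^ 2 + y 1 ^ 2 by ring]
  have hy0 : y 0 = A 0 0 * x 0 + A 0 1 * x 1 := by
    rw [← hAx]; simp [Matrix.mulVec, dotProduct, Fin.sum_univ_two]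
  have hy1 : y 1 = A 1 0 * x 0 + A 1 1 * x 1 := by
    rw [← hAx]; simp [Matrix.mulVec, dotProduct, Fin.sum_univ_two]
  have hv0 : v 0 = A 0 0 * (-(x 1)) + A 0 1 * x 0 := by
    rw [hv]; simp [Matrix.mulVec, dotProduct, Fin.sum_univ_two, hxp0, hxp1]
  have hv1 : v 1 = A 1 0 * (-(x 1)) + A 1 1 * x 0 := by
    rw [hv]; simp [Matrix.mulVec, dotProduct, Fin.sum_univ_two, hxp0, hxp1]
  have cross_id : -(v 0) * y 1 + v 1 * y 0 = x 0 ^ 2 + x 1 ^ 2 := by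
    rw [hv0, hv1, hy0, hy1]
    linear_combination (x 0 ^ 2 + x 1 ^ 2) * hdet
  set α : ℝ := w 0 * x 0 + w 1 * x 1 with hα
  set β : ℝ := w 0 * (-(x 1)) + w 1 * x 0 with hβ
  set s : ℝ := v 0 * y 0 + v 1 * y 1 with hs
  have I1 : (x 0 ^ 2 + x 1 ^ 2) • w = α • x + β • xp := by
    funext i
    fin_cases i <;>
      simp only [Pi.smul_apply, Pi.add_apply, smul_eq_mul, Fin.zero_eta, Fin.mk_one,
        hxp0, hxp1, hα, hβ] <;> ring
  have I2 : (y 0 ^ 2 + y 1 ^ 2) • v = s • y + (x 0 ^ 2 + x 1 ^ 2) • yp := by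
    funext i
    fin_cases i <;>
      simp only [Pi.smul_apply, Pi.add_apply, smul_eq_mul, Fin.zero_eta, Fin.mk_one,
        hyp0, hyp1, hs]
    · linear_combination (-(y 1)) * cross_id
    · linear_combination (y 0) * cross_id
  have X2nn : (0 : ℝ) ≤ x 0 ^ 2 + x 1 ^ 2 := by positivity
  have Y2nn : (0 : ℝ) ≤ y 0 ^ 2 + y 1 ^ 2 := by positivity
  have hCx : (B * A).mulVec x = z := by rw [← Matrix.mulVec_mulVec, hAx, hBy]
  have hCxp : (B * A).mulVec xp = B.mulVec v := by rw [← Matrix.mulVec_mulVec]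
  have EQ1 : (x 0 ^ 2 + x 1 ^ 2) • ((B * A).mulVec w) = α • z + β • (B.mulVec v) := by
    rw [← Matrix.mulVec_smul, I1, Matrix.mulVec_add, Matrix.mulVec_smul,
      Matrix.mulVec_smul, hCx, hCxp]
  have EQ2 : (y 0 ^ 2 + y 1 ^ 2) • (B.mulVec v) =
      s • z + (x 0 ^ 2 + x 1 ^ 2) • (B.mulVec yp) := by
    rw [← Matrix.mulVec_smul, I2, Matrix.mulVec_add, Matrix.mulVec_smul,
      Matrix.mulVec_smul, hBy]
  have hEN1 : (x 0 ^ 2 + x 1 ^ 2) * en ((B * A).mulVec w) ≤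
      |α| * en z + |β| * en (B.mulVec v) := by
    calc (x 0 ^ 2 + x 1 ^ 2) * en ((B * A).mulVec w)
        = en ((x 0 ^ 2 + x 1 ^ 2) • ((B * A).mulVec w)) := by
          rw [en_smul, abs_of_nonneg X2nn]
      _ = en (α • z + β • (B.mulVec v)) := by rw [EQ1]
      _ ≤ en (α • z) + en (β • (B.mulVec v)) := en_add_le _ _
      _ = |α| * en z + |β| * en (B.mulVec v) := by rw [en_smul, en_smul]
  have hByp : en (B.mulVec yp) ≤ NB * en y := by
    have := hB yp; rwa [en_yp] at this
  have hNBy : (0 : ℝ) ≤ NB * en y := le_trans (en_nonneg _) hByp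
  have hEN2 : (y 0 ^ 2 + y 1 ^ 2) * en (B.mulVec v) ≤
      |s| * en z + (x 0 ^ 2 + x 1 ^ 2) * (NB * en y) := by
    calc (y 0 ^ 2 + y 1 ^ 2) * en (B.mulVec v)
        = en ((y 0 ^ 2 + y 1 ^ 2) • (B.mulVec v)) := by rw [en_smul, abs_of_nonneg Y2nn]
      _ = en (s • z + (x 0 ^ 2 + x 1 ^ 2) • (B.mulVec yp)) := by rw [EQ2]
      _ ≤ en (s • z) + en ((x 0 ^ 2 + x 1 ^ 2) • (B.mulVec yp)) := en_add_le _ _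
      _ = |s| * en z + (x 0 ^ 2 + x 1 ^ 2) * en (B.mulVec yp) := by
          rw [en_smul, en_smul, abs_of_nonneg X2nn]
      _ ≤ |s| * en z + (x 0 ^ 2 + x 1 ^ 2) * (NB * en y) := by
          have := mul_le_mul_of_nonneg_left hByp X2nn; linarith
  have henv : en v ≤ NA * en x := by
    have := hA xp; rwa [en_xp] at this
  have hs_le : |s| ≤ NA * en x * en y := by
    have h1 := en_inner_abs_le v y
    have h2 := mul_le_mul_of_nonneg_right henv (en_nonneg y)
    rw [hs]; linarith
  have hαle : |α| ≤ en w * en x := by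
    have := en_inner_abs_le w x; rw [hα]; linarith
  have hβle : |β| ≤ en w * en x := by
    have h := en_inner_abs_le w xp
    rw [en_xp, hxp0, hxp1] at h
    rw [hβ]; linarith
  have hEN1' : en x ^ 2 * en ((B * A).mulVec w) ≤ |α| * en z + |β| * en (B.mulVec v) := by
    rw [en_sq x]; exact hEN1
  have hEN2' : en y ^ 2 * en (B.mulVec v) ≤ |s| * en z + en x ^ 2 * (NB * en y) := by
    rw [en_sq y, en_sq x]; exact hEN2
  have t1 : (en y ^ 2) * (|α| * en z) ≤ (en y ^ 2) * ((en w * en x) * en z) :=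
    mul_le_mul_of_nonneg_left (mul_le_mul_of_nonneg_right hαle (en_nonneg z)) (sq_nonneg _)
  have t2 : |β| * (|s| * en z) ≤ (en w * en x) * ((NA * en x * en y) * en z) :=
    mul_le_mul hβle (mul_le_mul_of_nonneg_right hs_le (en_nonneg z))
      (mul_nonneg (abs_nonneg s) (en_nonneg z))
      (mul_nonneg (en_nonneg w) (en_nonneg x))
  have t3 : |β| * (en x ^ 2 * (NB * en y)) ≤ (en w * en x) * (en x ^ 2 * (NB * en y)) :=
    mul_le_mul_of_nonneg_right hβle (mul_nonneg (sq_nonneg _) hNBy)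
  have step1 : (en y ^ 2) * ((en x ^ 2) * en ((B * A).mulVec w)) ≤
      (en y ^ 2) * (|α| * en z + |β| * en (B.mulVec v)) :=
    mul_le_mul_of_nonneg_left hEN1' (sq_nonneg _)
  have step2 : |β| * ((en y ^ 2) * en (B.mulVec v)) ≤
      |β| * (|s| * en z + en x ^ 2 * (NB * en y)) :=
    mul_le_mul_of_nonneg_left hEN2' (abs_nonneg β)
  linarith [step1, step2, t1, t2, t3]

/-! ### Quantitative lemmas -/

lemma unif_bounds {P γ ε m : ℝ} (hP : 0 ≤ P) (hm : 0 < m) (hγε : 0 < γ - ε)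
    (h : |1 / m * Real.log P - γ| ≤ ε) :
    Real.exp ((γ - ε) * m) ≤ P ∧ P ≤ Real.exp ((γ + ε) * m) := by
  obtain ⟨h1, h2⟩ := abs_le.mp h
  have hne : m ≠ 0 := ne_of_gt hm
  have hlow : (γ - ε) * m ≤ Real.log P := by
    have h3 : (γ - ε) ≤ 1 / m * Real.log P := by linarith
    calc (γ - ε) * m ≤ (1 / m * Real.log P) * m := mul_le_mul_of_nonneg_right h3 hm.le
      _ = Real.log P := by field_simp
  have hup : Real.log P ≤ (γ + ε) * m := by
    have h3 : 1 / m * Real.log P ≤ γ + ε := by linarith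
    calc Real.log P = (1 / m * Real.log P) * m := by field_simp
      _ ≤ (γ + ε) * m := mul_le_mul_of_nonneg_right h3 hm.le
  have hPpos : 0 < P := by
    rcases hP.lt_or_eq with h4 | h4
    · exact h4
    · exfalso
      rw [← h4, Real.log_zero] at hlow
      nlinarith
  constructor
  · rw [← Real.exp_log hPpos]
    exact Real.exp_le_exp.mpr hlow
  · rw [← Real.exp_log hPpos]
    exact Real.exp_le_exp.mpr hup

lemma exists_good_n (c D : ℝ) (hc : 0 < c) (hD : 0 < D) (k N : ℕ) :
    ∃ n : ℕ, N ≤ n ∧ 1 ≤ n ∧ D * (2 + (n : ℝ)) ^ k < Real.exp (c * n) := by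
  have h1 := Real.tendsto_exp_div_pow_atTop k
  rw [Filter.tendsto_atTop] at h1
  have h2 := h1 (D * 3 ^ k / c ^ k + 1)
  rw [Filter.eventually_atTop] at h2
  obtain ⟨x₀, hx₀⟩ := h2
  refine ⟨max N (max 1 (⌈x₀ / c⌉₊ + 1)), le_max_left _ _, ?_, ?_⟩
  · exact le_trans (le_max_left 1 _) (le_max_right _ _)
  set n : ℕ := max N (max 1 (⌈x₀ / c⌉₊ + 1)) with hn
  have hn1 : (1 : ℝ) ≤ n := by
    have : 1 ≤ n := le_trans (le_max_left 1 _) (le_max_right _ _)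
    exact_mod_cast this
  have hxn : x₀ ≤ c * n := by
    have h3 : (⌈x₀ / c⌉₊ : ℝ) + 1 ≤ (n : ℝ) := by
      have : ⌈x₀ / c⌉₊ + 1 ≤ n := le_trans (le_max_right 1 _) (le_max_right _ _)
      exact_mod_cast this
    have h4 : x₀ / c ≤ (⌈x₀ / c⌉₊ : ℝ) := Nat.le_ceil _
    have h5 : x₀ / c ≤ (n : ℝ) := by linarith
    calc x₀ = (x₀ / c) * c := by field_simp
      _ ≤ (n : ℝ) * c := mul_le_mul_of_nonneg_right h5 hc.le
      _ = c * n := by ring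
  have h6 := hx₀ (c * n) hxn
  have hcn : (0 : ℝ) < c * n := by positivity
  have h7 : (D * 3 ^ k / c ^ k) * (c * n) ^ k < Real.exp (c * n) := by
    have h8 : (0 : ℝ) < (c * n) ^ k := by positivity
    have hQ := (le_div_iff₀ h8).mp h6
    nlinarith [hQ, h8]
  have h9 : (c * (n : ℝ)) ^ k = c ^ k * (n : ℝ) ^ k := mul_pow c _ k
  have h10 : (D * 3 ^ k / c ^ k) * (c * n) ^ k = D * (3 * n) ^ k := by
    rw [h9, mul_pow]
    field_simp
  have h11 : (2 + (n : ℝ)) ^ k ≤ (3 * n) ^ k := by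
    apply pow_le_pow_left₀ (by positivity)
    linarith
  calc D * (2 + (n : ℝ)) ^ k ≤ D * (3 * n) ^ k := mul_le_mul_of_nonneg_left h11 hD.le
    _ < Real.exp (c * n) := by rw [← h10]; exact h7

end NPBSHelpers

set_option maxHeartbeats 2000000 in
/-- If `M^E` is uniform with `γ(E) > 0`, then every polynomially bounded solution
of the difference equation `u(n+1) + u(n-1) + (ω(n) - E) u(n) = 0` vanishes identically. -/
theorem no_polynomially_bounded_solutions
    (A : Finset ℝ) (Ω : Set (ℤ → ℝ)) (μ : Measure (ℤ → ℝ))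
    (hsub : IsSubshift A Ω) (hmin : IsMinimalSubshift Ω)
    (hue : IsUniquelyErgodicWith Ω μ)
    (E : ℝ) (hunif : IsUniformAt Ω E (lyap μ E)) (hpos : 0 < lyap μ E) :
    ∀ ω ∈ Ω, ∀ u : ℤ → ℝ,
      (∀ n : ℤ, u (n + 1) + u (n - 1) + (ω n - E) * u n = 0) →
      (∃ C > (0 : ℝ), ∃ k : ℕ, ∀ n : ℤ, |u n| ≤ C * (1 + ((|n| : ℤ) : ℝ)) ^ k) →
      ∀ n : ℤ, u n = 0 := by
  intro ω hω u hu hpb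
  by_contra hne
  push_neg at hne
  obtain ⟨n₀, hn₀⟩ := hne
  have hW0 : ¬(u 0 = 0 ∧ u 1 = 0) := by
    rintro ⟨h0, h1⟩
    exact hn₀ (sol_zero E ω u hu h0 h1 n₀)
  obtain ⟨C, hC, k, hbd⟩ := hpb
  set γ := lyap μ E with hγdef
  obtain ⟨N, hN⟩ := hunif (γ / 4) (by linarith)
  set b : ℝ := en ![u 1, u 0] with hbdef
  have hb : 0 < b := by
    rw [hbdef]
    apply Real.sqrt_pos.mpr
    have e0 : (![u 1, u 0] : Fin 2 → ℝ) 0 = u 1 := rfl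
    have e1 : (![u 1, u 0] : Fin 2 → ℝ) 1 = u 0 := rfl
    rw [e0, e1]
    rcases not_and_or.mp hW0 with h | h
    · nlinarith [sq_nonneg (u 1), sq_abs (u 0), abs_pos.mpr h]
    · nlinarith [sq_nonneg (u 0), sq_abs (u 1), abs_pos.mpr h]
  obtain ⟨n, hnN, hn1, hbig⟩ := exists_good_n (γ / 4) (6 * C / b)
    (by linarith) (by positivity) k N
  have hn1R : (1 : ℝ) ≤ (n : ℝ) := by exact_mod_cast hn1
  set P : ℝ := 2 * C * (2 + (n : ℝ)) ^ k with hPdef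
  have hPpos : 0 < P := by rw [hPdef]; positivity
  set ω' : ℤ → ℝ := shiftZ (-(n : ℤ)) ω with hω'def
  have hω'mem : ω' ∈ Ω := shiftZ_mem hsub.inv _ ω hω
  set u' : ℤ → ℝ := fun m => u (m - (n : ℤ)) with hu'def
  have hu' : ∀ m : ℤ, u' (m + 1) + u' (m - 1) + (ω' m - E) * u' m = 0 := by
    intro m
    have h := hu (m - n)
    rw [show m - (n : ℤ) + 1 = m + 1 - n by ring,
      show m - (n : ℤ) - 1 = m - 1 - n by ring] at h
    show u (m + 1 - n) + u (m - 1 - n) + (ω (m + -(n : ℤ)) - E) * u (m - n) = 0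
    rw [show m + -(n : ℤ) = m - n by ring]
    exact h
  set A := cocP E n ω' with hAdef
  set B := cocP E n ω with hBdef
  set x : Fin 2 → ℝ := ![u (1 - (n : ℤ)), u (-(n : ℤ))] with hxdef
  set y : Fin 2 → ℝ := ![u 1, u 0] with hydef
  set z : Fin 2 → ℝ := ![u ((n : ℤ) + 1), u (n : ℤ)] with hzdef
  have hAx : A.mulVec x = y := by
    have h := cocP_mulVec_sol E ω' u' hu' n
    have e1 : (![u' 1, u' 0] : Fin 2 → ℝ) = x := by
      rw [hxdef]
      show (![u (1 - (n : ℤ)), u (0 - (n : ℤ))] : Fin 2 → ℝ) = _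
      rw [show (0 : ℤ) - (n : ℤ) = -(n : ℤ) by ring]
    have e2 : (![u' ((n : ℤ) + 1), u' (n : ℤ)] : Fin 2 → ℝ) = y := by
      rw [hydef]
      show (![u ((n : ℤ) + 1 - n), u ((n : ℤ) - n)] : Fin 2 → ℝ) = _
      rw [show (n : ℤ) + 1 - (n : ℤ) = 1 by ring, show (n : ℤ) - (n : ℤ) = 0 by ring]
    rw [← e1, ← e2]
    exact h
  have hBy : B.mulVec y = z := cocP_mulVec_sol E ω u hu n
  have hprod : cocP E (2 * n) ω' = B * A := by
    rw [two_mul, cocP_add]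
    have hsh : shiftZ (n : ℤ) ω' = ω := by
      rw [hω'def, shiftZ_shiftZ, show (n : ℤ) + -(n : ℤ) = 0 by ring, shiftZ_zero]
    rw [hsh]
  have hyb : en y = b := rfl
  have hx2le : ∀ (m : ℤ), |m| ≤ (n : ℤ) → ((|m| : ℤ) : ℝ) ≤ (n : ℝ) := by
    intro m hm; exact_mod_cast hm
  have habs_le : ∀ (m : ℤ), ((|m| : ℤ) : ℝ) ≤ (n : ℝ) + 1 → |u m| ≤ C * (2 + (n : ℝ)) ^ k := by
    intro m hm
    have h := hbd m
    have hmono : (1 + ((|m| : ℤ) : ℝ)) ^ k ≤ (2 + (n : ℝ)) ^ k := by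
      apply pow_le_pow_left₀ (by positivity)
      linarith
    calc |u m| ≤ C * (1 + ((|m| : ℤ) : ℝ)) ^ k := h
      _ ≤ C * (2 + (n : ℝ)) ^ k := mul_le_mul_of_nonneg_left hmono hC.le
  have hz_le : en z ≤ P := by
    apply le_trans (en_le_abs z)
    have e0 : z 0 = u ((n : ℤ) + 1) := rfl
    have e1 : z 1 = u (n : ℤ) := rfl
    rw [e0, e1, hPdef]
    have b0 : |u ((n : ℤ) + 1)| ≤ C * (2 + (n : ℝ)) ^ k := by
      apply habs_le
      rw [show |(n : ℤ) + 1| = (n : ℤ) + 1 from abs_of_nonneg (by positivity)]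
      push_cast; linarith
    have b1 : |u (n : ℤ)| ≤ C * (2 + (n : ℝ)) ^ k := by
      apply habs_le
      rw [show |(n : ℤ)| = (n : ℤ) from abs_of_nonneg (by positivity)]
      push_cast; linarith
    linarith
  have hx_le : en x ≤ P := by
    apply le_trans (en_le_abs x)
    have e0 : x 0 = u (1 - (n : ℤ)) := rfl
    have e1 : x 1 = u (-(n : ℤ)) := rfl
    rw [e0, e1, hPdef]
    have b0 : |u (1 - (n : ℤ))| ≤ C * (2 + (n : ℝ)) ^ k := by
      apply habs_le
      have habs1 : |1 - (n : ℤ)| = (n : ℤ) - 1 := by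
        rw [abs_sub_comm]
        exact abs_of_nonneg (sub_nonneg.mpr (by exact_mod_cast hn1))
      rw [habs1]
      push_cast; linarith
    have b1 : |u (-(n : ℤ))| ≤ C * (2 + (n : ℝ)) ^ k := by
      apply habs_le
      rw [abs_neg, show |(n : ℤ)| = (n : ℤ) from abs_of_nonneg (by positivity)]
      push_cast; linarith
    linarith
  have hx_pos : 0 < en x := by
    rcases (en_nonneg x).lt_or_eq with h | h
    · exact h
    · exfalso
      obtain ⟨h0, h1⟩ := en_eq_zero h.symm
      have hy0 : y 0 = 0 := by
        rw [← hAx]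
        simp [Matrix.mulVec, dotProduct, Fin.sum_univ_two, h0, h1]
      have hy1 : y 1 = 0 := by
        rw [← hAx]
        simp [Matrix.mulVec, dotProduct, Fin.sum_univ_two, h0, h1]
      exact hW0 ⟨hy1, hy0⟩
  have key_unif : ∀ (m : ℕ), 1 ≤ m → N ≤ m → ∀ ω₀ ∈ Ω,
      Real.exp ((γ - γ / 4) * m) ≤ opNorm (cocP E m ω₀) ∧
        opNorm (cocP E m ω₀) ≤ Real.exp ((γ + γ / 4) * m) := by
    intro m hm1 hmN ω₀ hω₀
    have habs : |(m : ℤ)| = (m : ℤ) := abs_of_nonneg (by exact_mod_cast Nat.zero_le m)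
    have h := hN (m : ℤ) (by rw [habs]; exact_mod_cast hmN) ω₀ hω₀
    have hcoc : coc E (m : ℤ) ω₀ = cocP E m ω₀ := by
      rw [coc, if_pos (show (0 : ℤ) ≤ (m : ℤ) from by exact_mod_cast Nat.zero_le m)]
      norm_num
    rw [hcoc, habs] at h
    have hcast : (((m : ℤ)) : ℝ) = (m : ℝ) := by push_cast; rfl
    rw [hcast] at h
    exact unif_bounds (opNorm_nonneg _) (by exact_mod_cast hm1) (by linarith) h
  set Λ := Real.exp ((γ + γ / 4) * n) with hΛdef
  have hΛpos : 0 < Λ := Real.exp_pos _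
  have hNA : opNorm A ≤ Λ := (key_unif n hn1 hnN ω' hω'mem).2
  have hNB : opNorm B ≤ Λ := (key_unif n hn1 hnN ω hω).2
  have hClow : Real.exp ((γ - γ / 4) * ((2 * n : ℕ) : ℝ)) ≤ opNorm (cocP E (2 * n) ω') :=
    (key_unif (2 * n) (by omega) (by omega) ω' hω'mem).1
  have hbNA : b ≤ opNorm A * en x := by
    rw [← hyb, ← hAx]
    exact en_mulVec_le A x
  have hbΛ : b ≤ Λ * en x :=
    le_trans hbNA (mul_le_mul_of_nonneg_right hNA (en_nonneg x))
  have hdetA : A 0 0 * A 1 1 - A 0 1 * A 1 0 = 1 := by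
    have h := cocP_det E ω' n
    rwa [Matrix.det_fin_two] at h
  have hopC : opNorm (cocP E (2 * n) ω') ≤ 3 * Λ * P / b := by
    apply opNorm_le_of _ _ (by positivity)
    intro w
    rw [hprod]
    have KEY := key_bound A B x y z (opNorm A) (opNorm B) hdetA hAx hBy
      (fun v => en_mulVec_le A v) (fun v => en_mulVec_le B v) w
    rw [hyb] at KEY
    have h1 : en z * b ≤ P * (Λ * en x) := mul_le_mul hz_le hbΛ hb.le hPpos.le
    have h1' : (en z * b) * (b * en x) ≤ (P * (Λ * en x)) * (b * en x) :=
      mul_le_mul_of_nonneg_right h1 (mul_nonneg hb.le (en_nonneg x))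
    have h2 : opNorm A * en z ≤ Λ * P :=
      mul_le_mul hNA hz_le (en_nonneg z) hΛpos.le
    have h2' : (opNorm A * en z) * (en x ^ 2 * b) ≤ (Λ * P) * (en x ^ 2 * b) :=
      mul_le_mul_of_nonneg_right h2 (mul_nonneg (sq_nonneg _) hb.le)
    have h3 : opNorm B * en x ≤ Λ * P :=
      mul_le_mul hNB hx_le (en_nonneg x) hΛpos.le
    have h3' : (opNorm B * en x) * (en x ^ 2 * b) ≤ (Λ * P) * (en x ^ 2 * b) :=
      mul_le_mul_of_nonneg_right h3 (mul_nonneg (sq_nonneg _) hb.le)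
    have hsum : en z * b ^ 2 * en x + opNorm A * en x ^ 2 * b * en z
        + opNorm B * en x ^ 3 * b ≤ 3 * (Λ * P) * (en x ^ 2 * b) := by
      linarith [h1', h2', h3']
    have hRHS : (en z * b ^ 2 * en x + opNorm A * en x ^ 2 * b * en z
          + opNorm B * en x ^ 3 * b) * en w
        ≤ (3 * (Λ * P) * (en x ^ 2 * b)) * en w :=
      mul_le_mul_of_nonneg_right hsum (en_nonneg w)
    have KEY2 : en x ^ 2 * b ^ 2 * en ((B * A).mulVec w)
        ≤ (3 * (Λ * P) * (en x ^ 2 * b)) * en w := le_trans KEY hRHS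
    have hpos2 : 0 < en x ^ 2 * b := mul_pos (pow_pos hx_pos 2) hb
    have hfin : b * en ((B * A).mulVec w) ≤ 3 * Λ * P * en w := by
      have hmul : (en x ^ 2 * b) * (b * en ((B * A).mulVec w))
          ≤ (en x ^ 2 * b) * (3 * Λ * P * en w) := by linarith [KEY2]
      exact le_of_mul_le_mul_left hmul hpos2
    rw [div_mul_eq_mul_div, le_div_iff₀ hb]
    linarith [hfin]
  have hsplit : Real.exp ((γ - γ / 4) * ((2 * n : ℕ) : ℝ))
      = Real.exp ((γ / 4) * n) * Λ := by
    rw [hΛdef, ← Real.exp_add]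
    congr 1
    push_cast
    ring
  have hchain : Real.exp ((γ / 4) * n) * Λ ≤ 3 * Λ * P / b := by
    rw [← hsplit]
    exact le_trans hClow hopC
  have hchain2 : Real.exp ((γ / 4) * n) * Λ * b ≤ 3 * Λ * P :=
    (le_div_iff₀ hb).mp hchain
  have hstep : Real.exp ((γ / 4) * n) * b ≤ 3 * P := by
    have hmul : Λ * (Real.exp ((γ / 4) * n) * b) ≤ Λ * (3 * P) := by linarith [hchain2]
    exact le_of_mul_le_mul_left hmul hΛpos
  have hbig2 : 6 * C * (2 + (n : ℝ)) ^ k < Real.exp ((γ / 4) * n) * b := by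
    have heq : 6 * C * (2 + (n : ℝ)) ^ k = (6 * C / b) * (2 + (n : ℝ)) ^ k * b := by
      field_simp
    rw [heq]
    exact mul_lt_mul_of_pos_right hbig hb
  have h3P : 3 * P = 6 * C * (2 + (n : ℝ)) ^ k := by rw [hPdef]; ring
  linarith [hstep, hbig2, h3P]
end
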